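/- arXiv:2605.00947 — 6 statements merged into one kernel-verified Lean document; each statement's English description precedes it below -/
import Mathlib

section
/- Let f : ℕ → ℝ be a sequence satisfying a linear recurrence relation over ℝ whose characteristic polynomial has no positive real roots. Then either f is eventually zero (there exists K such that f(k) = 0 for all k ≥ K), or f assumes strictly negative values for infinitely many indices k. -/
open Polynomial
set_option maxHeartbeats 1000000


noncomputable def Sop : Module.End ℝ (ℕ → ℝ) :=
{ toFun := fun f k => f (k+1),
  map_add' := fun f g => rfl,
  map_smul' := fun r f => rfl }

lemma Sop_pow (n : ℕ) (f : ℕ → ℝ) (k : ℕ) : (Sop ^ n) f k = f (k + n) := by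
  induction n generalizing f k with
  | zero => rfl
  | succ m ih =>
    rw [pow_succ]
    show (Sop ^ m) (Sop f) k = _
    rw [ih]
    show f (k + m + 1) = _
    ring_nf

lemma aeval_Sop (P : ℝ[X]) (f : ℕ → ℝ) (k : ℕ) :
    (Polynomial.aeval Sop P) f k = P.sum fun n a => a * f (k + n) := by
  induction P using Polynomial.induction_on' with
  | add p q hp hq =>
      rw [map_add, Polynomial.sum_add_index]
      · show (Polynomial.aeval Sop p) f k + (Polynomial.aeval Sop q) f k = _
        rw [hp, hq]
      · intro i; ring
      · intro a b₁ b₂; ring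
  | monomial n a =>
      rw [Polynomial.sum_monomial_index]
      · rw [Polynomial.aeval_monomial]
        show ((algebraMap ℝ _ a) * Sop ^ n) f k = _
        rw [Module.End.mul_apply]
        have : (algebraMap ℝ (Module.End ℝ (ℕ → ℝ)) a) = a • (1 : Module.End ℝ (ℕ → ℝ)) :=
          Algebra.algebraMap_eq_smul_one a
        rw [this]
        simp [Sop_pow]
      · ring



lemma nonneg_coeff_mul {p q : ℝ[X]} (hp : ∀ n, 0 ≤ p.coeff n) (hq : ∀ n, 0 ≤ q.coeff n) :
    ∀ n, 0 ≤ (p * q).coeff n := by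
  intro n
  rw [Polynomial.coeff_mul]
  exact Finset.sum_nonneg fun x _ => mul_nonneg (hp _) (hq _)

lemma quad_mult (b c : ℝ) (hc : 0 < c) (hdisc : b ^ 2 < 4 * c) :
    ∃ T : ℝ[X], T ≠ 0 ∧ ∀ n, 0 ≤ ((X ^ 2 + C b * X + C c) * T).coeff n := by
  rcases le_or_gt 0 b with hb | hb
  · refine ⟨1, one_ne_zero, fun n => ?_⟩
    rw [mul_one]
    rcases n with _ | _ | _ | n
    · simpa using hc.le
    · simpa using hb
    · simp
    · simp [Polynomial.coeff_X, Polynomial.coeff_C, Polynomial.coeff_X_pow]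
  · set β : ℝ := -b with hβdef
    have hβ : 0 < β := by simp [hβdef]; linarith
    have hdisc' : β ^ 2 < 4 * c := by rw [hβdef]; nlinarith
    set ρ : ℝ := (β ^ 2 / (4 * c) + 1) / 2 with hρdef
    have hρ0 : 0 < ρ := by positivity
    have hρ1 : ρ < 1 := by
      rw [hρdef]
      have : β ^ 2 / (4 * c) < 1 := by rw [div_lt_one (by linarith)]; linarith
      linarith
    have hkey : β ^ 2 < 4 * c * ρ := by
      have h1 : β ^ 2 / (4 * c) < ρ := by
        rw [hρdef]
        have : 0 ≤ β ^ 2 / (4 * c) := by positivity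
        nlinarith [hρ1]
      calc β ^ 2 = (β ^ 2 / (4 * c)) * (4 * c) := by field_simp
        _ < ρ * (4 * c) := by apply mul_lt_mul_of_pos_right h1; linarith
        _ = 4 * c * ρ := by ring
    set R : ℝ := β / (c * ρ) with hRdef
    have hR : 0 < R := by positivity
    obtain ⟨M', hM'⟩ := exists_pow_lt_of_lt_one (show (0:ℝ) < 1 / (β * R) by positivity) hρ1
    set M : ℕ := M' + 1 with hMdef
    have hM1 : 1 ≤ M := by omega
    have hMle : β * (R * ρ ^ M) ≤ 1 := by
      have h2 : ρ ^ M ≤ ρ ^ M' := pow_le_pow_of_le_one hρ0.le hρ1.le (by omega)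
      have h3 : ρ ^ M < 1 / (β * R) := lt_of_le_of_lt h2 hM'
      rw [lt_div_iff₀ (by positivity)] at h3
      nlinarith
    set t : ℕ → ℝ := fun k => R ^ k * ρ ^ (∑ i ∈ Finset.range (k + 1), i) with htdef
    have ht0 : t 0 = 1 := by simp [htdef]
    have htpos : ∀ k, 0 < t k := fun k => by positivity
    have htsucc : ∀ k, t (k + 1) = t k * (R * ρ ^ (k + 1)) := by
      intro k
      simp only [htdef]
      rw [Finset.sum_range_succ (n := k + 1), pow_succ R, pow_add]
      ring
    have hkeyineq : ∀ r : ℝ, 0 < r → 0 ≤ 1 + b * r + c * ρ * r ^ 2 := by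
      intro r hr
      nlinarith [sq_nonneg (2 * c * ρ * r + b), mul_pos hc hρ0]
    set T : ℝ[X] := ∑ k ∈ Finset.range (M + 1), C (t k) * X ^ k with hTdef
    have hTc : ∀ n, T.coeff n = if n ≤ M then t n else 0 := by
      intro n
      rw [hTdef, Polynomial.finset_sum_coeff]
      simp only [Polynomial.coeff_C_mul, Polynomial.coeff_X_pow, mul_ite, mul_one, mul_zero]
      rw [Finset.sum_ite_eq (Finset.range (M + 1)) n t]
      simp [Nat.lt_succ_iff]
    have hT0 : T ≠ 0 := by
      intro h
      have h1 : T.coeff 0 = 1 := by rw [hTc]; simp [ht0]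
      rw [h] at h1
      simp at h1
    refine ⟨T, hT0, fun n => ?_⟩
    have hcoeff : ((X ^ 2 + C b * X + C c) * T).coeff n =
        (if 2 ≤ n then T.coeff (n - 2) else 0) + b * ((if 1 ≤ n then T.coeff (n - 1) else 0))
          + c * T.coeff n := by
      have h1 : (X ^ 2 + C b * X + C c) * T = T * X ^ 2 + C b * (T * X ^ 1) + C c * T := by
        ring
      rw [h1, Polynomial.coeff_add, Polynomial.coeff_add, Polynomial.coeff_C_mul,
        Polynomial.coeff_C_mul, Polynomial.coeff_mul_X_pow', Polynomial.coeff_mul_X_pow']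
    rw [hcoeff]
    rcases n with _ | _ | m
    · rw [if_neg (by omega), if_neg (by omega), hTc, if_pos (by omega), ht0]
      linarith
    · rw [if_neg (by omega), if_pos (by omega), hTc, hTc, if_pos (by omega),
        if_pos (by omega)]
      show 0 ≤ 0 + b * t 0 + c * t 1
      have h1 : t 1 = R * ρ := by rw [show (1:ℕ) = 0 + 1 from rfl, htsucc 0, ht0, pow_one]; ring
      have h2 : c * t 1 = β := by
        rw [h1, hRdef]
        field_simp
      rw [ht0, h2]
      simp [hβdef]
    · rw [if_pos (by omega), if_pos (by omega)]
      have e2 : m + 2 - 2 = m := by omega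
      have e1 : m + 2 - 1 = m + 1 := by omega
      rw [e2, e1]
      rcases (by omega : m + 2 ≤ M ∨ m + 1 = M ∨ m = M ∨ M < m) with h | h | h | h
      · rw [hTc, hTc, hTc, if_pos (by omega), if_pos (by omega), if_pos (by omega)]
        rw [htsucc (m + 1), htsucc m]
        have hr : 0 < R * ρ ^ (m + 1) := by positivity
        have h5 : R * ρ ^ (m + 2) = (R * ρ ^ (m + 1)) * ρ := by rw [pow_succ]; ring
        rw [h5]
        nlinarith [mul_nonneg (htpos m).le (hkeyineq (R * ρ ^ (m + 1)) hr), htpos m]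
      · rw [hTc, hTc, hTc, if_pos (by omega), if_pos (by omega), if_neg (by omega)]
        rw [htsucc m]
        have hbr : β * (R * ρ ^ (m + 1)) ≤ 1 := by rw [show m + 1 = M from h]; exact hMle
        have hrpos : (0:ℝ) < R * ρ ^ (m + 1) := by positivity
        have : 0 ≤ t m * (1 + b * (R * ρ ^ (m + 1))) := by
          apply mul_nonneg (htpos m).le
          rw [hβdef] at hbr
          nlinarith
        nlinarith
      · rw [hTc, hTc, hTc, if_pos (by omega), if_neg (by omega), if_neg (by omega)]
        simp only [mul_zero, add_zero]
        exact (htpos m).le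
      · rw [hTc, hTc, hTc, if_neg (by omega), if_neg (by omega), if_neg (by omega)]
        norm_num


lemma exists_multiplier : ∀ N : ℕ, ∀ P : ℝ[X], P.Monic → P.natDegree ≤ N →
    (∀ x : ℝ, 0 < x → 0 < P.eval x) →
    ∃ Q : ℝ[X], Q ≠ 0 ∧ ∀ n, 0 ≤ (P * Q).coeff n := by
  intro N
  induction N with
  | zero =>
    intro P hm hdeg _
    have hP1 : P = 1 := hm.natDegree_eq_zero.mp (by omega)
    refine ⟨1, one_ne_zero, fun n => ?_⟩
    rw [hP1, mul_one]
    rcases n with _ | n <;> simp [Polynomial.coeff_one]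
  | succ N ih =>
    intro P hm hdeg hpos
    rcases Nat.eq_zero_or_pos P.natDegree with h0 | hd
    · have hP1 : P = 1 := hm.natDegree_eq_zero.mp h0
      refine ⟨1, one_ne_zero, fun n => ?_⟩
      rw [hP1, mul_one]
      rcases n with _ | n <;> simp [Polynomial.coeff_one]
    · have hP0 : P ≠ 0 := hm.ne_zero
      obtain ⟨z, hz⟩ : ∃ z : ℂ, (aeval z) P = 0 :=
        IsAlgClosed.exists_aeval_eq_zero ℂ P
          (by rw [Polynomial.degree_eq_natDegree hP0]; exact_mod_cast hd.ne')
      by_cases him : z.im = 0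
      · lift z to ℝ using him
        erw [aeval_ofReal, Complex.ofReal_eq_zero] at hz
        have hzle : z ≤ 0 := by
          by_contra h
          push_neg at h
          exact (hpos z h).ne' hz
        obtain ⟨P', hP'⟩ : (X - C z) ∣ P := dvd_iff_isRoot.mpr hz
        have hmon' : P'.Monic := (monic_X_sub_C z).of_mul_monic_left (hP' ▸ hm)
        have hdeg' : P'.natDegree ≤ N := by
          have h1 : P.natDegree = 1 + P'.natDegree := by
            rw [hP', natDegree_mul (X_sub_C_ne_zero z) hmon'.ne_zero, natDegree_X_sub_C]
          omega
        have hpos' : ∀ x : ℝ, 0 < x → 0 < P'.eval x := by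
          intro x hx
          have h2 := hpos x hx
          rw [hP', eval_mul, eval_sub, eval_X, eval_C] at h2
          nlinarith [h2]
        obtain ⟨Q', hQ'0, hQ'⟩ := ih P' hmon' hdeg' hpos'
        refine ⟨Q', hQ'0, ?_⟩
        have hre : P * Q' = (X - C z) * (P' * Q') := by rw [hP']; ring
        rw [hre]
        apply nonneg_coeff_mul _ hQ'
        intro n
        rcases n with _ | _ | n <;>
          simp [Polynomial.coeff_X, Polynomial.coeff_C, Polynomial.coeff_sub]
        · linarith
      · have hdvd := Polynomial.quadratic_dvd_of_aeval_eq_zero_im_ne_zero P hz him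
        set q : ℝ[X] := X ^ 2 - C (2 * z.re) * X + C (‖z‖ ^ 2) with hqdef
        have hqform : q = X ^ 2 + C (-(2 * z.re)) * X + C (‖z‖ ^ 2) := by
          rw [hqdef, map_neg]; ring
        have hnormsq : ‖z‖ ^ 2 = z.re ^ 2 + z.im ^ 2 := by
          simp [Complex.sq_norm, Complex.normSq_apply]; ring
        have himsq : 0 < z.im ^ 2 := by positivity
        have hqpos : ∀ x : ℝ, 0 < q.eval x := by
          intro x
          rw [hqdef]
          simp only [eval_add, eval_sub, eval_mul, eval_pow, eval_X, eval_C]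
          nlinarith [sq_nonneg (x - z.re)]
        have hqmonic : q.Monic := by
          rw [hqform, add_assoc]
          apply monic_X_pow_add
          apply lt_of_le_of_lt (Polynomial.degree_add_le _ _)
          rw [max_lt_iff]
          constructor
          · exact lt_of_le_of_lt (Polynomial.degree_C_mul_X_le _) (by norm_num)
          · exact lt_of_le_of_lt (Polynomial.degree_C_le) (by norm_num)
        obtain ⟨P', hP'⟩ := hdvd
        have hmon' : P'.Monic := hqmonic.of_mul_monic_left (hP' ▸ hm)
        have hdeg' : P'.natDegree ≤ N := by
          have h1 : P.natDegree = 2 + P'.natDegree := by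
            have hq2 : q.natDegree = 2 := by rw [hqdef]; compute_degree!
            rw [hP', natDegree_mul hqmonic.ne_zero hmon'.ne_zero, hq2]
          omega
        have hpos' : ∀ x : ℝ, 0 < x → 0 < P'.eval x := by
          intro x hx
          have h2 := hpos x hx
          rw [hP', eval_mul] at h2
          nlinarith [hqpos x]
        obtain ⟨Q', hQ'0, hQ'⟩ := ih P' hmon' hdeg' hpos'
        have hz0 : 0 < ‖z‖ ^ 2 := by
          have hzne : z ≠ 0 := fun h => him (by simp [h])
          exact pow_pos (norm_pos_iff.mpr hzne) 2
        have hdisc : (-(2 * z.re)) ^ 2 < 4 * ‖z‖ ^ 2 := by nlinarith [hnormsq, himsq]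
        obtain ⟨T, hT0, hT⟩ := quad_mult (-(2 * z.re)) (‖z‖ ^ 2) hz0 hdisc
        refine ⟨T * Q', mul_ne_zero hT0 hQ'0, ?_⟩
        have hre : P * (T * Q') = ((X ^ 2 + C (-(2 * z.re)) * X + C (‖z‖ ^ 2)) * T) * (P' * Q') := by
          rw [hP', hqform]; ring
        rw [hre]
        exact nonneg_coeff_mul hT hQ'




/-- **Bell–Gerhold.** A real linear recurrence sequence whose characteristic polynomial
has no positive real roots is either eventually zero or assumes negative values
infinitely often. -/
theorem lrs_no_positive_real_roots (f : ℕ → ℝ) (d : ℕ) (c : Fin d → ℝ)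
    (hrec : ∀ k : ℕ, f (k + d) = ∑ i : Fin d, c i * f (k + i))
    (hroots : ∀ ρ : ℝ, 0 < ρ →
      ¬ ((X ^ d - ∑ i : Fin d, C (c i) * X ^ (i : ℕ) : ℝ[X]).IsRoot ρ)) :
    (∃ K : ℕ, ∀ k ≥ K, f k = 0) ∨ (∀ K : ℕ, ∃ k ≥ K, f k < 0) := by
  rcases Nat.eq_zero_or_pos d with hd0 | hd
  · left
    refine ⟨0, fun k _ => ?_⟩
    have h := hrec k
    subst hd0
    simpa using h
  by_cases hneg : ∀ K : ℕ, ∃ k ≥ K, f k < 0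
  · exact Or.inr hneg
  left
  push_neg at hneg
  obtain ⟨K, hK⟩ := hneg
  set P : ℝ[X] := X ^ d - ∑ i : Fin d, C (c i) * X ^ (i : ℕ) with hP
  have hsumdeg : (∑ i : Fin d, C (c i) * X ^ (i : ℕ)).degree < (d : WithBot ℕ) := by
    apply lt_of_le_of_lt (Polynomial.degree_sum_le _ _)
    rw [Finset.sup_lt_iff (by exact_mod_cast WithBot.bot_lt_coe d)]
    intro i _
    apply lt_of_le_of_lt (Polynomial.degree_C_mul_X_pow_le _ _)
    exact_mod_cast i.2
  have hmonic : P.Monic := monic_X_pow_sub (by simpa [Polynomial.degree_X_pow] using hsumdeg)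
  have hPdeg : P.degree = d := by
    rw [hP, degree_sub_eq_left_of_degree_lt (by simpa using hsumdeg), degree_X_pow]
  have hPpos : ∀ x : ℝ, 0 < x → 0 < P.eval x := by
    intro x hx
    by_contra hle
    push_neg at hle
    have hne : P.eval x ≠ 0 := fun h => hroots x hx h
    have hlt : P.eval x < 0 := lt_of_le_of_ne hle hne
    have htop : Filter.Tendsto (fun y : ℝ => P.eval y) Filter.atTop Filter.atTop := by
      apply Polynomial.tendsto_atTop_of_leadingCoeff_nonneg
      · rw [hPdeg]; exact_mod_cast hd
      · rw [hmonic.leadingCoeff]; norm_num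
    obtain ⟨x1, hx1⟩ := ((htop.eventually_ge_atTop 1).and (Filter.eventually_ge_atTop x)).exists
    have hx1le : x ≤ x1 := hx1.2
    have hx1pos : (0:ℝ) ≤ P.eval x1 := by linarith [hx1.1]
    have hsub := intermediate_value_Icc hx1le (P.continuousOn (s := Set.Icc x x1))
    have h0mem : (0:ℝ) ∈ Set.Icc (P.eval x) (P.eval x1) := ⟨hlt.le, hx1pos⟩
    obtain ⟨r, hrmem, hr0⟩ := hsub h0mem
    exact hroots r (lt_of_lt_of_le hx hrmem.1) hr0
  have hPrec : (Polynomial.aeval Sop) P f = 0 := by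
    have h1 : (Polynomial.aeval Sop) P = Sop ^ d - ∑ i : Fin d, c i • Sop ^ (i : ℕ) := by
      rw [hP, map_sub, map_pow, aeval_X, map_sum]
      congr 1
      refine Finset.sum_congr rfl fun i _ => ?_
      rw [map_mul, aeval_C, map_pow, aeval_X]
      exact (Algebra.smul_def _ _).symm
    funext k
    rw [h1]
    have h2 : ((Sop ^ d - ∑ i : Fin d, c i • Sop ^ (i : ℕ)) f) k
        = f (k + d) - ∑ i : Fin d, c i * f (k + i) := by
      rw [LinearMap.sub_apply, LinearMap.sum_apply]
      simp [Sop_pow, Finset.sum_apply]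
    rw [h2]
    show f (k + d) - ∑ i : Fin d, c i * f (k + i) = 0
    rw [hrec k]
    ring
  obtain ⟨Q, hQ0, hQ⟩ := exists_multiplier P.natDegree P hmonic le_rfl hPpos
  set G : ℝ[X] := Q * P with hG
  have hGne : G ≠ 0 := mul_ne_zero hQ0 hmonic.ne_zero
  have hGcoeff : ∀ n, 0 ≤ G.coeff n := by
    intro n; rw [hG, mul_comm]; exact hQ n
  set D := G.natDegree with hD
  have hlead : 0 < G.coeff D :=
    lt_of_le_of_ne (hGcoeff D) (Ne.symm (Polynomial.leadingCoeff_ne_zero.mpr hGne))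
  have hGf : ∀ k, (Polynomial.aeval Sop) G f k = 0 := by
    intro k
    rw [hG, map_mul]
    show ((Polynomial.aeval Sop Q) ((Polynomial.aeval Sop P) f)) k = 0
    rw [hPrec, map_zero]
    rfl
  have hkey : ∀ k, K ≤ k → f (k + D) = 0 := by
    intro k hk
    have h0 : G.sum (fun n a => a * f (k + n)) = 0 := by rw [← aeval_Sop, hGf]
    rw [Polynomial.sum_def] at h0
    have hterms : ∀ n ∈ G.support, 0 ≤ G.coeff n * f (k + n) :=
      fun n _ => mul_nonneg (hGcoeff n) (hK (k + n) (by omega))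
    have hzero := (Finset.sum_eq_zero_iff_of_nonneg hterms).mp h0 D
      (Polynomial.natDegree_mem_support_of_nonzero hGne)
    rcases mul_eq_zero.mp hzero with h | h
    · exact absurd h hlead.ne'
    · exact h
  refine ⟨K + D, fun m hm => ?_⟩
  have hmD : m - D + D = m := by omega
  rw [← hmD]
  exact hkey (m - D) (by omega)
end

section
/- Let E be a finite-dimensional real vector space, let L : E → E be a linear map having no positive real eigenvalue, and let φ : E → ℝ be a linear functional. Then for every x ∈ E there exist infinitely many natural numbers k with φ(L^k x) ≤ 0. -/
open Polynomial

private lemma aux_coeff_mul_nonneg {p q : ℝ[X]} (hp : ∀ i, 0 ≤ p.coeff i)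
    (hq : ∀ i, 0 ≤ q.coeff i) : ∀ i, 0 ≤ (p * q).coeff i := by
  intro i
  rw [Polynomial.coeff_mul]
  exact Finset.sum_nonneg fun x _ => mul_nonneg (hp _) (hq _)

private lemma aux_core (β γ T n s w : ℝ) (hβ : 0 < β) (hγ : 0 < γ)
    (hs2 : 2 ≤ s) (hw0 : 0 ≤ w) (hsw : s + w = n + 1)
    (hT0 : 1 ≤ T) (hT3 : β ^ 2 * (T + 1) ^ 2 ≤ 4 * γ * T ^ 2)
    (hN1 : β * T ≤ γ * (n + 1 - T)) (hN2 : β * (T + 1) ≤ n - T)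
    (hsint : T < s → T + 1 ≤ s) (hwint : T < w → T + 1 ≤ w) :
    0 ≤ s * (s - 1) - β * s * (w + 1) + γ * w * (w + 1) := by
  rcases le_or_gt s T with hsT | hsT
  · have hwlarge : n + 1 - T ≤ w := by linarith
    have h1 : β * s ≤ γ * w := by
      calc β * s ≤ β * T := by nlinarith
        _ ≤ γ * (n + 1 - T) := hN1
        _ ≤ γ * w := by nlinarith
    nlinarith
  · rcases le_or_gt w T with hwT | hwT
    · have h1 : β * (w + 1) ≤ s - 1 := by
        calc β * (w + 1) ≤ β * (T + 1) := by nlinarith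
          _ ≤ n - T := hN2
          _ ≤ s - 1 := by linarith
      nlinarith [mul_le_mul_of_nonneg_left h1 (by linarith : (0:ℝ) ≤ s),
        mul_nonneg (mul_nonneg hγ.le hw0) (by linarith : (0:ℝ) ≤ w + 1)]
    · have hsT1 : T + 1 ≤ s := hsint hsT
      have hwT1 : T + 1 ≤ w := hwint hwT
      have h1 : s * T ≤ (s - 1) * (T + 1) := by nlinarith
      have h2 : (w + 1) * T ≤ w * (T + 1) := by nlinarith
      have hT0' : (0:ℝ) < T + 1 := by linarith
      have hsw1 : (0:ℝ) ≤ s * (w + 1) := mul_nonneg (by linarith) (by linarith)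
      have key : β ^ 2 * (s * (w + 1)) ≤ 4 * γ * ((s - 1) * w) := by
        have c1 : s * (w + 1) * (T * T) ≤ (s - 1) * w * ((T + 1) * (T + 1)) := by
          have hp1 : (0:ℝ) ≤ (w + 1) * T := mul_nonneg (by linarith) (by linarith)
          have hp2 : (0:ℝ) ≤ (s - 1) * (T + 1) := mul_nonneg (by linarith) (by linarith)
          calc s * (w + 1) * (T * T) = (s * T) * ((w + 1) * T) := by ring
            _ ≤ ((s - 1) * (T + 1)) * (w * (T + 1)) := mul_le_mul h1 h2 hp1 hp2
            _ = (s - 1) * w * ((T + 1) * (T + 1)) := by ring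
        have e3 : (β ^ 2 * (s * (w + 1))) * ((T + 1) * (T + 1))
            ≤ (4 * γ * ((s - 1) * w)) * ((T + 1) * (T + 1)) := by
          calc (β ^ 2 * (s * (w + 1))) * ((T + 1) * (T + 1))
              = (β ^ 2 * (T + 1) ^ 2) * (s * (w + 1)) := by ring
            _ ≤ (4 * γ * T ^ 2) * (s * (w + 1)) := mul_le_mul_of_nonneg_right hT3 hsw1
            _ = (4 * γ) * (s * (w + 1) * (T * T)) := by ring
            _ ≤ (4 * γ) * ((s - 1) * w * ((T + 1) * (T + 1))) :=
                mul_le_mul_of_nonneg_left c1 (by positivity)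
            _ = (4 * γ * ((s - 1) * w)) * ((T + 1) * (T + 1)) := by ring
        exact le_of_mul_le_mul_right e3 (mul_pos hT0' hT0')
      have hZ : 0 ≤ β * s * (w + 1) :=
        mul_nonneg (mul_nonneg hβ.le (by linarith)) (by linarith)
      have h4 : (β * s * (w + 1)) ^ 2 ≤ 4 * (s * (s - 1)) * (γ * w * (w + 1)) := by
        calc (β * s * (w + 1)) ^ 2 = (β ^ 2 * (s * (w + 1))) * (s * (w + 1)) := by ring
          _ ≤ (4 * γ * ((s - 1) * w)) * (s * (w + 1)) := mul_le_mul_of_nonneg_right key hsw1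
          _ = 4 * (s * (s - 1)) * (γ * w * (w + 1)) := by ring
      have hX : (0:ℝ) ≤ s * (s - 1) := mul_nonneg (by linarith) (by linarith)
      have hY : (0:ℝ) ≤ γ * w * (w + 1) :=
        mul_nonneg (mul_nonneg hγ.le hw0) (by linarith)
      have hZ2 : (β * s * (w + 1)) ^ 2 ≤ (s * (s - 1) + γ * w * (w + 1)) ^ 2 := by
        nlinarith [h4, sq_nonneg (s * (s - 1) - γ * w * (w + 1))]
      nlinarith [hZ2, hZ, hX, hY]

private lemma aux_transfer (β γ A B D s w : ℝ) (hB : 0 < B)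
    (idA : B * (s - 1) = A * (w + 1)) (idD : D * s = B * w)
    (hg : 0 ≤ s * (s - 1) - β * s * (w + 1) + γ * w * (w + 1))
    (hs : 0 < s) (hw : 0 ≤ w) : 0 ≤ A - β * B + γ * D := by
  have expand : (A - β * B + γ * D) * (s * (w + 1)) =
      B * (s * (s - 1) - β * s * (w + 1) + γ * w * (w + 1)) := by
    linear_combination (-s) * idA + (γ * (w + 1)) * idD
  have hpos : (0:ℝ) < s * (w + 1) := by nlinarith
  nlinarith [mul_nonneg hB.le hg, expand, hpos]

private lemma aux_lemA (β γ : ℝ) (hγ : 0 < γ) (hβγ : β ^ 2 < 4 * γ) :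
    ∃ N : ℕ, ∀ k : ℕ,
      0 ≤ (((1 + X) ^ N * (X ^ 2 - C β * X + C γ) : ℝ[X])).coeff k := by
  have hcoeff : ∀ (N k : ℕ), (((1 + X) ^ N * (X ^ 2 - C β * X + C γ) : ℝ[X])).coeff k
      = (if 2 ≤ k then (N.choose (k - 2) : ℝ) else 0)
        - β * (if 1 ≤ k then (N.choose (k - 1) : ℝ) else 0)
        + γ * (N.choose k : ℝ) := by
    intro N k
    have h1 : ((1 + X) ^ N * (X ^ 2 - C β * X + C γ) : ℝ[X])
        = (1 + X) ^ N * X ^ 2 - C β * ((1 + X) ^ N * X ^ 1) + C γ * (1 + X) ^ N := by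
      ring
    rw [h1, coeff_add, coeff_sub, coeff_mul_X_pow', coeff_C_mul, coeff_C_mul,
      coeff_mul_X_pow', coeff_one_add_X_pow, coeff_one_add_X_pow, coeff_one_add_X_pow]
  rcases le_or_gt β 0 with hβ | hβ
  · refine ⟨0, fun k => ?_⟩
    rw [hcoeff]
    have h1 : (0:ℝ) ≤ if 2 ≤ k then ((Nat.choose 0 (k - 2) : ℕ) : ℝ) else 0 := by positivity
    have h2 : (0:ℝ) ≤ if 1 ≤ k then ((Nat.choose 0 (k - 1) : ℕ) : ℝ) else 0 := by positivity
    have h3 : (0:ℝ) ≤ γ * ((Nat.choose 0 k : ℕ) : ℝ) := by positivity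
    nlinarith [mul_nonpos_of_nonpos_of_nonneg hβ h2]
  -- now β > 0
  have hδ : 0 < 4 * γ - β ^ 2 := by linarith
  obtain ⟨T, hT⟩ := exists_nat_gt (3 * β ^ 2 / (4 * γ - β ^ 2) + 1)
  have hT1 : (1:ℝ) ≤ T := by
    have : 0 ≤ 3 * β ^ 2 / (4 * γ - β ^ 2) := by positivity
    linarith
  have hT2 : 3 * β ^ 2 ≤ (4 * γ - β ^ 2) * T := by
    have h := (div_lt_iff₀ hδ).mp (by linarith : 3 * β ^ 2 / (4 * γ - β ^ 2) < T)
    linarith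
  have hT3 : β ^ 2 * ((T:ℝ) + 1) ^ 2 ≤ 4 * γ * (T:ℝ) ^ 2 := by nlinarith
  obtain ⟨N, hN⟩ := exists_nat_gt ((T:ℝ) + β * T / γ + β * ((T:ℝ) + 1) + (T:ℝ) + 2)
  have hdiv : β * (T:ℝ) / γ * γ = β * T := div_mul_cancel₀ _ (ne_of_gt hγ)
  have hN1 : β * (T:ℝ) ≤ γ * ((N:ℝ) + 1 - T) := by
    have h1 : β * (T:ℝ) / γ ≤ (N:ℝ) + 1 - T := by
      have hb : 0 ≤ β * ((T:ℝ)+1) := by positivity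
      linarith
    calc β * (T:ℝ) = β * (T:ℝ) / γ * γ := hdiv.symm
      _ ≤ ((N:ℝ) + 1 - T) * γ := mul_le_mul_of_nonneg_right h1 hγ.le
      _ = γ * ((N:ℝ) + 1 - T) := by ring
  have hN2 : β * ((T:ℝ) + 1) ≤ (N:ℝ) - T := by
    have : 0 ≤ β * (T:ℝ) / γ := by positivity
    linarith
  have hN3 : β ≤ γ * (N:ℝ) := by
    have h1 : (T:ℝ) + 1 ≤ N := by
      have h2 : 0 ≤ β * (T:ℝ) / γ := by positivity
      have h3 : 0 ≤ β * ((T:ℝ)+1) := by positivity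
      linarith
    nlinarith
  refine ⟨N, fun k => ?_⟩
  rw [hcoeff]
  rcases Nat.lt_or_ge k 2 with hk2 | hk2
  · interval_cases k
    · rw [if_neg (by omega), if_neg (by omega), Nat.choose_zero_right]
      push_cast
      have : (0:ℝ) ≤ (N.choose 0 : ℝ) := by positivity
      nlinarith
    · rw [if_neg (by omega), if_pos (by omega)]
      simp only [Nat.sub_self, Nat.choose_zero_right, Nat.choose_one_right]
      push_cast
      nlinarith
  · rw [if_pos hk2, if_pos (by omega : 1 ≤ k)]
    rcases Nat.lt_or_ge (N + 1) k with hkN | hkN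
    · -- k ≥ N + 2 : middle and last binomials vanish
      rw [Nat.choose_eq_zero_of_lt (by omega : N < k - 1), Nat.choose_eq_zero_of_lt (by omega : N < k)]
      push_cast
      have : (0:ℝ) ≤ (N.choose (k - 2) : ℝ) := by positivity
      nlinarith
    · -- main case 2 ≤ k ≤ N + 1
      have hk1N : k - 1 ≤ N := by omega
      have hk2N : k - 2 ≤ N := by omega
      have hBpos : (0:ℝ) < (N.choose (k-1) : ℝ) := by exact_mod_cast Nat.choose_pos hk1N
      have hs2 : (2:ℝ) ≤ (k:ℝ) := by exact_mod_cast hk2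
      have hsN : (k:ℝ) ≤ (N:ℝ) + 1 := by exact_mod_cast hkN
      have hw0 : (0:ℝ) ≤ (N:ℝ) - k + 1 := by linarith
      have ek1 : ((k - 1 : ℕ) : ℝ) = (k:ℝ) - 1 := by
        rw [Nat.cast_sub (by omega : 1 ≤ k)]; norm_num
      have ek2 : ((k - 2 : ℕ) : ℝ) = (k:ℝ) - 2 := by
        rw [Nat.cast_sub hk2]; norm_num
      have idA : (N.choose (k-1) : ℝ) * ((k:ℝ) - 1)
          = (N.choose (k-2) : ℝ) * (((N:ℝ) - k + 1) + 1) := by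
        have h := Nat.choose_succ_right_eq N (k - 2)
        rw [show k - 2 + 1 = k - 1 by omega] at h
        have h' := congrArg (fun n : ℕ => (n : ℝ)) h
        push_cast [Nat.cast_sub hk2N] at h'
        rw [ek1, ek2] at h'
        linarith
      have idD : (N.choose k : ℝ) * (k:ℝ) = (N.choose (k-1) : ℝ) * ((N:ℝ) - k + 1) := by
        have h := Nat.choose_succ_right_eq N (k - 1)
        rw [show k - 1 + 1 = k by omega] at h
        have h' := congrArg (fun n : ℕ => (n : ℝ)) h
        push_cast [Nat.cast_sub hk1N] at h'
        rw [ek1] at h'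
        linarith
      have hsint : (T:ℝ) < (k:ℝ) → (T:ℝ) + 1 ≤ (k:ℝ) := by
        intro h
        have h1 : T < k := by exact_mod_cast h
        have h2 : T + 1 ≤ k := h1
        exact_mod_cast h2
      have hwint : (T:ℝ) < (N:ℝ) - k + 1 → (T:ℝ) + 1 ≤ (N:ℝ) - k + 1 := by
        intro h
        have h1 : (T:ℝ) + (k:ℝ) < (N:ℝ) + 1 := by linarith
        have h2 : T + k < N + 1 := by exact_mod_cast h1
        have h3 : T + k ≤ N := by omega
        have h4 : (T:ℝ) + (k:ℝ) ≤ (N:ℝ) := by exact_mod_cast h3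
        linarith
      have hg := aux_core β γ (T:ℝ) (N:ℝ) (k:ℝ) ((N:ℝ) - k + 1) hβ hγ hs2 hw0
        (by ring) hT1 hT3 hN1 hN2 hsint hwint
      exact aux_transfer β γ (N.choose (k-2) : ℝ) (N.choose (k-1) : ℝ) (N.choose k : ℝ)
        (k:ℝ) ((N:ℝ) - k + 1) hBpos idA idD hg (by linarith) hw0

private lemma aux_lemB : ∀ (n : ℕ) (q : ℝ[X]), q.natDegree ≤ n → q.Monic →
    (∀ t : ℝ, 0 ≤ t → q.eval t ≠ 0) →
    ∃ m : ℝ[X], (∀ i, 0 ≤ (m * q).coeff i) ∧ 0 < (m * q).eval 0 := by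
  intro n
  induction n with
  | zero =>
    intro q hdeg hq _
    have hq1 : q = 1 := hq.natDegree_eq_zero.mp (Nat.le_zero.mp hdeg)
    refine ⟨1, ?_, ?_⟩ <;> simp [hq1, Polynomial.coeff_one]
    intro i; split <;> norm_num
  | succ n ih =>
    intro q hdeg hq hqt
    by_cases hd0 : q.natDegree = 0
    · have hq1 : q = 1 := hq.natDegree_eq_zero.mp hd0
      refine ⟨1, ?_, ?_⟩ <;> simp [hq1, Polynomial.coeff_one]
      intro i; split <;> norm_num
    · have hdpos : 0 < q.natDegree := Nat.pos_of_ne_zero hd0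
      have hmapdeg : (q.map (algebraMap ℝ ℂ)).degree = q.degree :=
        degree_map_eq_of_injective (algebraMap ℝ ℂ).injective q
      have hdegpos : 0 < (q.map (algebraMap ℝ ℂ)).degree := by
        rw [hmapdeg]; exact natDegree_pos_iff_degree_pos.mp hdpos
      obtain ⟨z, hz⟩ := Complex.exists_root hdegpos
      have hzeval : ∀ w : ℂ, (q.map (algebraMap ℝ ℂ)).eval w = (aeval w) q := by
        intro w; rw [aeval_def, eval_map]
      by_cases him : z.im = 0
      · -- real root
        set r : ℝ := z.re with hr
        have hzr : z = (r : ℂ) := by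
          apply Complex.ext <;> simp [hr, him]
        have hroot : q.eval r = 0 := by
          have h1 : (algebraMap ℝ ℂ) (q.eval r) = 0 := by
            have h2 := hz
            rw [IsRoot, hzr, eval_map,
              show ((r : ℝ) : ℂ) = algebraMap ℝ ℂ r from rfl, eval₂_at_apply] at h2
            exact h2
          exact (map_eq_zero_iff _ (algebraMap ℝ ℂ).injective).mp h1
        have hrneg : r < 0 := by
          by_contra h
          exact hqt r (le_of_not_gt h) hroot
        obtain ⟨q₁, hq₁⟩ := dvd_iff_isRoot.mpr hroot
        have hq₁monic : q₁.Monic := (monic_X_sub_C r).of_mul_monic_left (hq₁ ▸ hq)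
        have hdq : q.natDegree = 1 + q₁.natDegree := by
          rw [hq₁, natDegree_mul (X_sub_C_ne_zero r) hq₁monic.ne_zero, natDegree_X_sub_C]
        have hq₁t : ∀ t : ℝ, 0 ≤ t → q₁.eval t ≠ 0 := by
          intro t ht h
          exact hqt t ht (by rw [hq₁, eval_mul, h, mul_zero])
        obtain ⟨m₁, hm₁, hm₁0⟩ := ih q₁ (by omega) hq₁monic hq₁t
        refine ⟨m₁, ?_, ?_⟩
        · have hrw : m₁ * q = (X + C (-r)) * (m₁ * q₁) := by
            rw [hq₁]; ring_nf; rw [map_neg]; ring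
          rw [hrw]
          apply aux_coeff_mul_nonneg
          · intro i
            rcases i with _ | _ | i <;>
              simp [coeff_add, Polynomial.coeff_X, Polynomial.coeff_C] <;> linarith
          · exact hm₁
        · have hrw : m₁ * q = (X + C (-r)) * (m₁ * q₁) := by
            rw [hq₁]; ring_nf; rw [map_neg]; ring
          rw [hrw, eval_mul]
          have : (X + C (-r) : ℝ[X]).eval 0 = -r := by simp
          rw [this]
          exact mul_pos (by linarith) hm₁0
      · -- genuinely complex root
        set β : ℝ := 2 * z.re with hβ
        set γ : ℝ := Complex.normSq z with hγdef
        have hγ : 0 < γ := Complex.normSq_pos.mpr (fun h => him (by simp [h]))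
        have hβγ : β ^ 2 < 4 * γ := by
          simp only [hβ, hγdef, Complex.normSq_apply]
          have : z.im ≠ 0 := him
          nlinarith [mul_self_pos.mpr this]
        set d : ℝ[X] := X ^ 2 - C β * X + C γ with hd
        have hdmonic : d.Monic := by
          have he : d = X ^ 2 + (C (-β) * X + C γ) := by rw [hd, map_neg]; ring
          rw [he]
          apply monic_X_pow_add
          apply lt_of_le_of_lt (degree_add_le _ _)
          apply max_lt
          · exact lt_of_le_of_lt (degree_C_mul_X_le _) (by decide)
          · exact lt_of_le_of_lt degree_C_le (by decide)
        have hmapd : d.map (algebraMap ℝ ℂ) = (X - C z) * (X - C ((starRingEnd ℂ) z)) := by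
          have h1 : ((z:ℂ) + (starRingEnd ℂ) z) = ((β : ℝ) : ℂ) := by
            rw [Complex.add_conj, hβ]
          have h2 : z * (starRingEnd ℂ) z = ((γ : ℝ) : ℂ) := by
            rw [Complex.mul_conj, hγdef]
          have expand : (X - C z) * (X - C ((starRingEnd ℂ) z))
              = X ^ 2 - C (z + (starRingEnd ℂ) z) * X + C (z * (starRingEnd ℂ) z) := by
            simp only [map_add, map_mul]; ring
          rw [expand, h1, h2]
          simp only [hd, Polynomial.map_add, Polynomial.map_sub, Polynomial.map_pow,
            Polynomial.map_mul, Polynomial.map_X, Polynomial.map_C]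
          norm_num [Complex.coe_algebraMap]
        have hconj : (q.map (algebraMap ℝ ℂ)).IsRoot ((starRingEnd ℂ) z) := by
          have h1 : (aeval z) q = 0 := by rw [← hzeval]; exact hz
          have h2 : (aeval ((starRingEnd ℂ) z)) q = 0 := by
            rw [Polynomial.aeval_conj, h1, map_zero]
          rw [IsRoot, hzeval]; exact h2
        have hcop : IsCoprime (X - C z) (X - C ((starRingEnd ℂ) z)) := by
          apply isCoprime_X_sub_C_of_isUnit_sub
          rw [isUnit_iff_ne_zero, sub_ne_zero]
          intro h
          exact him (Complex.conj_eq_iff_im.mp h.symm)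
        have hdvdC : (X - C z) * (X - C ((starRingEnd ℂ) z)) ∣ q.map (algebraMap ℝ ℂ) :=
          hcop.mul_dvd (dvd_iff_isRoot.mpr hz) (dvd_iff_isRoot.mpr hconj)
        have hdvd : d ∣ q := by
          rw [← Polynomial.map_dvd_map' (algebraMap ℝ ℂ), hmapd]
          exact hdvdC
        obtain ⟨q₁, hq₁⟩ := hdvd
        have hq₁monic : q₁.Monic := hdmonic.of_mul_monic_left (hq₁ ▸ hq)
        have hdnatdeg : d.natDegree = 2 := by
          rw [hd]; compute_degree!
        have hdq : q.natDegree = 2 + q₁.natDegree := by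
          rw [hq₁, natDegree_mul hdmonic.ne_zero hq₁monic.ne_zero, hdnatdeg]
        have hdevalpos : ∀ t : ℝ, 0 < d.eval t := by
          intro t
          have : d.eval t = (t - z.re) ^ 2 + z.im ^ 2 := by
            simp [hd, hβ, hγdef, Complex.normSq_apply]; ring
          rw [this]
          have : z.im ≠ 0 := him
          positivity
        have hq₁t : ∀ t : ℝ, 0 ≤ t → q₁.eval t ≠ 0 := by
          intro t ht h
          exact hqt t ht (by rw [hq₁, eval_mul, h, mul_zero])
        obtain ⟨m₁, hm₁, hm₁0⟩ := ih q₁ (by omega) hq₁monic hq₁t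
        obtain ⟨N, hN⟩ := aux_lemA β γ hγ hβγ
        refine ⟨(1 + X) ^ N * m₁, ?_, ?_⟩
        · have hrw : (1 + X) ^ N * m₁ * q = ((1 + X) ^ N * d) * (m₁ * q₁) := by
            rw [hq₁]; ring
          rw [hrw]
          exact aux_coeff_mul_nonneg hN hm₁
        · have hrw : (1 + X) ^ N * m₁ * q = ((1 + X) ^ N * d) * (m₁ * q₁) := by
            rw [hq₁]; ring
          rw [hrw, eval_mul, eval_mul, eval_pow]
          have h1 : ((1 + X : ℝ[X])).eval 0 = 1 := by simp
          rw [h1]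
          simp only [one_pow, one_mul]
          exact mul_pos (hdevalpos 0) hm₁0

/-- If a linear map `L` on a finite-dimensional real vector space has no positive real
eigenvalue, then for every linear functional `φ` and every point `x` there are
infinitely many `k` with `φ (L^k x) ≤ 0`. -/
theorem no_positive_eigenvalue_infinitely_often_nonpos
    (E : Type*) [AddCommGroup E] [Module ℝ E] [FiniteDimensional ℝ E]
    (L : E →ₗ[ℝ] E)
    (hL : ∀ ρ : ℝ, 0 < ρ → ∀ v : E, L v = ρ • v → v = 0)
    (φ : E →ₗ[ℝ] ℝ) (x : E) :
    ∀ K : ℕ, ∃ k ≥ K, φ ((L ^ k) x) ≤ 0 := by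
  by_contra hcon
  push_neg at hcon
  obtain ⟨K, hK⟩ := hcon
  -- the minimal polynomial has no positive real root
  have hint : IsIntegral ℝ L := Algebra.IsIntegral.isIntegral (R := ℝ) L
  set p : ℝ[X] := minpoly ℝ L with hpdef
  have hpmonic : p.Monic := minpoly.monic hint
  have hp0 : p ≠ 0 := hpmonic.ne_zero
  have hroot : ∀ ρ : ℝ, 0 < ρ → ¬ p.IsRoot ρ := by
    intro ρ hρ hr
    obtain ⟨v, hv⟩ := (Module.End.hasEigenvalue_of_isRoot (f := L) (μ := ρ) hr).exists_hasEigenvector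
    exact hv.2 (hL ρ hρ v hv.apply_eq_smul)
  -- split off the power of X
  set j : ℕ := p.rootMultiplicity 0 with hjdef
  have hXC : (X - C (0:ℝ)) = X := by simp
  set q : ℝ[X] := p /ₘ X ^ j with hqdef
  have hfac : X ^ j * q = p := by
    have h0 := pow_mul_divByMonic_rootMultiplicity_eq p 0
    rwa [hXC] at h0
  have hq0 : q.eval 0 ≠ 0 := by
    have h1 := eval_divByMonic_pow_rootMultiplicity_ne_zero (p := p) 0 hp0
    rwa [hXC] at h1
  have hqmonic : q.Monic := (monic_X_pow j).of_mul_monic_left (hfac.symm ▸ hpmonic)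
  have hqt : ∀ t : ℝ, 0 ≤ t → q.eval t ≠ 0 := by
    intro t ht h
    rcases eq_or_lt_of_le ht with h0 | h0
    · exact hq0 (h0 ▸ h)
    · apply hroot t h0
      rw [IsRoot, ← hfac, eval_mul, h, mul_zero]
  obtain ⟨m, hm, hm0⟩ := aux_lemB q.natDegree q le_rfl hqmonic hqt
  -- build the annihilating polynomial with nonnegative coefficients
  set h : ℝ[X] := m * q with hhdef
  set F : ℝ[X] := h * X ^ j with hFdef
  have hFL : Polynomial.aeval L F = 0 := by
    have hFp : F = m * p := by rw [hFdef, hhdef, ← hfac]; ring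
    rw [hFp, map_mul, hpdef, minpoly.aeval, mul_zero]
  have hFcoeff : ∀ i, 0 ≤ F.coeff i := by
    intro i
    rw [hFdef, coeff_mul_X_pow']
    split
    · exact hm _
    · exact le_refl _
  have hh0 : h.coeff 0 = h.eval 0 := coeff_zero_eq_eval_zero h
  have hFj : F.coeff j = h.eval 0 := by
    rw [hFdef, coeff_mul_X_pow']
    simp [hh0]
  have hFjpos : 0 < F.coeff j := by rw [hFj]; exact hm0
  have hjle : j ≤ F.natDegree := le_natDegree_of_ne_zero (ne_of_gt hFjpos)
  -- evaluate the recurrence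
  set y : E := (L ^ K) x with hydef
  have ha : ∀ i : ℕ, 0 < φ ((L ^ i) y) := by
    intro i
    have h1 : (L ^ i) y = (L ^ (i + K)) x := by
      rw [hydef, pow_add, Module.End.mul_apply]
    rw [h1]
    exact hK (i + K) (Nat.le_add_left K i)
  have hsum : φ ((Polynomial.aeval L F) y)
      = ∑ i ∈ Finset.range (F.natDegree + 1), F.coeff i * φ ((L ^ i) y) := by
    rw [Polynomial.aeval_eq_sum_range]
    rw [LinearMap.sum_apply, map_sum]
    congr 1
    funext i
    rw [LinearMap.smul_apply, map_smul, smul_eq_mul]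
  have hzero : φ ((Polynomial.aeval L F) y) = 0 := by rw [hFL]; simp
  have hpos : 0 < ∑ i ∈ Finset.range (F.natDegree + 1), F.coeff i * φ ((L ^ i) y) := by
    apply Finset.sum_pos'
    · exact fun i _ => mul_nonneg (hFcoeff i) (ha i).le
    · exact ⟨j, Finset.mem_range.mpr (by omega), mul_pos hFjpos (ha j)⟩
  rw [hsum] at hzero
  linarith
end

section
/- Let E be a finite-dimensional real vector space and L : E → E a linear map all of whose complex eigenvalues are positive real numbers. Let ρ_1 < ... < ρ_N be the (distinct) eigenvalues of L, and let E_j be the generalized eigenspace of L for ρ_j, so that E = E_1 ⊕ ... ⊕ E_N. Let x ∈ E be nonzero, write x = x_1 + ... + x_N with x_j ∈ E_j, and let M be the largest index with x_M ≠ 0. Then there exists a non-negative integer d such that the sequence (C(k,d))⁻¹ · ρ_M^{-k} · L^k x converges, as k → ∞, to a nonzero vector w satisfying L w = ρ_M w (an eigenvector of L for the eigenvalue ρ_M). Here C(k,d) denotes the binomial coefficient k choose d. -/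
open Filter Polynomial

/-- Binomial expansion of `L ^ k` applied to a generalized eigenvector. -/
private lemma binom_expand {E : Type*} [NormedAddCommGroup E] [NormedSpace ℝ E]
    (L : E →ₗ[ℝ] E) (a : ℝ) (r : ℕ) (v : E)
    (hv : ((L - a • (1 : E →ₗ[ℝ] E)) ^ r) v = 0) (k : ℕ) :
    (L ^ k) v = ∑ i ∈ Finset.range r,
      ((k.choose i : ℝ) * a ^ (k - i)) • ((L - a • (1 : E →ₗ[ℝ] E)) ^ i) v := by
  set Nl := L - a • (1 : E →ₗ[ℝ] E) with hNl
  have hL : L = Nl + a • (1 : E →ₗ[ℝ] E) := by rw [hNl]; abel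
  have hcomm : Commute Nl (a • (1 : E →ₗ[ℝ] E)) := (Commute.one_right Nl).smul_right a
  have hexp : (L ^ k) v = ∑ i ∈ Finset.range (k + 1),
      ((k.choose i : ℝ) * a ^ (k - i)) • (Nl ^ i) v := by
    conv_lhs => rw [hL, hcomm.add_pow]
    rw [LinearMap.coe_sum, Finset.sum_apply]
    refine Finset.sum_congr rfl fun i hi => ?_
    simp only [Module.End.mul_apply, Module.End.natCast_apply, _root_.smul_pow, one_pow,
      LinearMap.smul_apply, Module.End.one_apply, map_smul, map_nsmul]
    rw [← Nat.cast_smul_eq_nsmul ℝ, smul_smul]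
  rw [hexp]
  have hzero : ∀ i, r ≤ i → (Nl ^ i) v = 0 := by
    intro i hri
    have hpow : Nl ^ i = Nl ^ (i - r) * Nl ^ r := by
      rw [← pow_add]; congr 1; omega
    rw [hpow, Module.End.mul_apply, hv, map_zero]
  have h1 : ∑ i ∈ Finset.range (k + 1), ((k.choose i : ℝ) * a ^ (k - i)) • (Nl ^ i) v
      = ∑ i ∈ Finset.range (max (k + 1) r), ((k.choose i : ℝ) * a ^ (k - i)) • (Nl ^ i) v := by
    refine Finset.sum_subset (Finset.range_subset_range.2 (le_max_left _ _)) fun i _ hi => ?_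
    have hki : k < i := by simpa [Nat.lt_succ_iff] using hi
    rw [Nat.choose_eq_zero_of_lt hki]
    simp
  have h2 : ∑ i ∈ Finset.range r, ((k.choose i : ℝ) * a ^ (k - i)) • (Nl ^ i) v
      = ∑ i ∈ Finset.range (max (k + 1) r), ((k.choose i : ℝ) * a ^ (k - i)) • (Nl ^ i) v := by
    refine Finset.sum_subset (Finset.range_subset_range.2 (le_max_right _ _)) fun i _ hi => ?_
    rw [hzero i (by simpa using hi)]
    simp
  rw [h1, ← h2]

/-- Ratio of binomial coefficients tends to zero. -/
private lemma tendsto_choose_ratio {i d : ℕ} (h : i < d) :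
    Tendsto (fun k : ℕ => (k.choose i : ℝ) / (k.choose d)) atTop (nhds 0) := by
  obtain ⟨e, rfl⟩ : ∃ e, d = e + 1 := ⟨d - 1, by omega⟩
  have hmono : ∀ k : ℕ, 2 * (e + 1) ≤ k → ∀ j m, j ≤ m → m ≤ e → k.choose j ≤ k.choose m := by
    intro k hk j m hjm
    induction m, hjm using Nat.le_induction with
    | base => exact fun _ => le_rfl
    | succ m hm ih =>
        intro hme
        refine le_trans (ih (by omega)) (Nat.choose_le_succ_of_lt_half_left ?_)
        have : e + 1 ≤ k / 2 := Nat.le_div_iff_mul_le (by norm_num) |>.2 (by omega)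
        omega
  have hbound : ∀ k : ℕ, 2 * (e + 1) ≤ k →
      (k.choose i : ℝ) / (k.choose (e + 1)) ≤ ((e : ℝ) + 1) / ((k : ℝ) - e) := by
    intro k hk
    have hek : e + 1 ≤ k := by omega
    have hcpos : (0 : ℝ) < (k.choose (e + 1) : ℝ) := by
      exact_mod_cast Nat.choose_pos hek
    have hkpos : (0 : ℝ) < (k : ℝ) - e := by
      have : (e : ℝ) < (k : ℝ) := by exact_mod_cast (by omega : e < k)
      linarith
    have hid : (k.choose (e + 1) : ℝ) * ((e : ℝ) + 1) = (k.choose e : ℝ) * ((k : ℝ) - e) := by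
      have := Nat.choose_succ_right_eq k e
      have hc : ((k.choose (e + 1) * (e + 1) : ℕ) : ℝ) = ((k.choose e * (k - e) : ℕ) : ℝ) := by
        exact_mod_cast congrArg (Nat.cast (R := ℝ)) this
      push_cast [Nat.cast_sub (by omega : e ≤ k)] at hc
      linarith [hc]
    have h1 : (k.choose i : ℝ) / (k.choose (e + 1)) ≤ (k.choose e : ℝ) / (k.choose (e + 1)) := by
      gcongr
      exact_mod_cast hmono k hk i e (by omega) le_rfl
    have h2 : (k.choose e : ℝ) / (k.choose (e + 1)) = ((e : ℝ) + 1) / ((k : ℝ) - e) := by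
      rw [div_eq_div_iff hcpos.ne' hkpos.ne']
      linarith [hid]
    linarith [h1, h2.le]
  have hg : Tendsto (fun k : ℕ => ((e : ℝ) + 1) / ((k : ℝ) - e)) atTop (nhds 0) := by
    apply Tendsto.const_div_atTop
    have := tendsto_natCast_atTop_atTop (R := ℝ)
    exact tendsto_atTop_add_const_right atTop (-(e : ℝ)) this |>.congr (by intro k; ring)
  refine squeeze_zero' ?_ ?_ hg
  · filter_upwards with k
    positivity
  · filter_upwards [eventually_ge_atTop (2 * (e + 1))] with k hk using hbound k hk

/-- The contribution of a strictly smaller eigenvalue vanishes. -/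
private lemma tendsto_small_eig {a b : ℝ} (ha : 0 < a) (hab : a < b) (i d : ℕ) :
    Tendsto (fun k : ℕ => ((k.choose d : ℝ) * b ^ k)⁻¹ * ((k.choose i : ℝ) * a ^ (k - i)))
      atTop (nhds 0) := by
  have hb : 0 < b := ha.trans hab
  have hq0 : 0 ≤ a / b := by positivity
  have hq1 : a / b < 1 := (div_lt_one hb).2 hab
  have hg : Tendsto (fun k : ℕ => (a ^ i)⁻¹ * ((k : ℝ) ^ i * (a / b) ^ k)) atTop (nhds 0) := by
    have := (tendsto_pow_const_mul_const_pow_of_lt_one i hq0 hq1).const_mul ((a ^ i)⁻¹)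
    simpa using this
  refine squeeze_zero' ?_ ?_ hg
  · filter_upwards with k
    positivity
  · filter_upwards [eventually_ge_atTop (max d i)] with k hk
    have hdk : d ≤ k := le_trans (le_max_left _ _) hk
    have hik : i ≤ k := le_trans (le_max_right _ _) hk
    have hc1 : (1 : ℝ) ≤ (k.choose d : ℝ) := by exact_mod_cast Nat.choose_pos hdk
    have hc2 : (k.choose i : ℝ) ≤ (k : ℝ) ^ i := by exact_mod_cast Nat.choose_le_pow k i
    have hak : a ^ (k - i) = a ^ k / a ^ i := by
      rw [eq_div_iff (by positivity), ← pow_add]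
      congr 1; omega
    have hinv : ((k.choose d : ℝ) * b ^ k)⁻¹ ≤ (b ^ k)⁻¹ := by
      have hle : b ^ k ≤ (k.choose d : ℝ) * b ^ k :=
        le_mul_of_one_le_left (by positivity) hc1
      exact inv_anti₀ (by positivity) hle
    calc ((k.choose d : ℝ) * b ^ k)⁻¹ * ((k.choose i : ℝ) * a ^ (k - i))
        ≤ (b ^ k)⁻¹ * ((k : ℝ) ^ i * a ^ (k - i)) := by
          have hmid : (k.choose i : ℝ) * a ^ (k - i) ≤ (k : ℝ) ^ i * a ^ (k - i) :=
            mul_le_mul_of_nonneg_right hc2 (by positivity)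
          exact mul_le_mul hinv hmid (by positivity) (by positivity)
      _ = (a ^ i)⁻¹ * ((k : ℝ) ^ i * (a / b) ^ k) := by
          rw [hak, div_pow]
          ring

/-- For a linear map all of whose complex eigenvalues are positive reals, with distinct
eigenvalues `ρ 0 < … < ρ (N-1)` and generalized eigenspace decomposition
`x = x 0 + … + x (N-1)`, letting `M` be the largest index with `x M ≠ 0`, there is
`d ∈ ℕ` such that `(C(k,d) ρ_M^k)⁻¹ • L^k x` converges to an eigenvector of `L`
for the eigenvalue `ρ M`. -/
theorem positive_spectrum_dominant_direction
    (E : Type*) [NormedAddCommGroup E] [NormedSpace ℝ E] [FiniteDimensional ℝ E]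
    (L : E →ₗ[ℝ] E)
    (hspec : ∀ z : ℂ, ((LinearMap.charpoly L).map (algebraMap ℝ ℂ)).IsRoot z →
      z.im = 0 ∧ 0 < z.re)
    (N : ℕ) (ρ : Fin N → ℝ) (hmono : StrictMono ρ)
    (heig : ∀ r : ℝ, (LinearMap.charpoly L).IsRoot r ↔ ∃ j, ρ j = r)
    (x : Fin N → E)
    (hgen : ∀ j, ∃ r : ℕ, ((L - ρ j • (1 : E →ₗ[ℝ] E)) ^ r) (x j) = 0)
    (M : Fin N) (hM : x M ≠ 0) (htop : ∀ j, M < j → x j = 0) :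
    ∃ d : ℕ, ∃ w : E, w ≠ 0 ∧ L w = ρ M • w ∧
      Tendsto (fun k : ℕ => ((k.choose d : ℝ) * ρ M ^ k)⁻¹ • (L ^ k) (∑ j, x j))
        atTop (nhds w) := by
  classical
  have hpos : ∀ j, 0 < ρ j := by
    intro j
    have hroot : (LinearMap.charpoly L).IsRoot (ρ j) := (heig (ρ j)).2 ⟨j, rfl⟩
    have hmap := hroot.map (f := algebraMap ℝ ℂ)
    simpa using (hspec _ hmap).2
  choose r hr using hgen
  set Nl : E →ₗ[ℝ] E := L - ρ M • (1 : E →ₗ[ℝ] E) with hNldef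
  set P : ℕ → Prop := fun i => (Nl ^ i) (x M) ≠ 0 with hPdef
  set d := Nat.findGreatest P (r M) with hddef
  have hP0 : P 0 := by simpa [hPdef] using hM
  have hdP : (Nl ^ d) (x M) ≠ 0 := Nat.findGreatest_spec (Nat.zero_le _) hP0
  have hdle : d ≤ r M := Nat.findGreatest_le _
  have hzero : ∀ i, d < i → (Nl ^ i) (x M) = 0 := by
    intro i hdi
    by_cases hirM : i ≤ r M
    · have := Nat.findGreatest_is_greatest (hddef ▸ hdi) hirM
      simpa [hPdef, not_not] using this
    · push_neg at hirM
      have hpow : Nl ^ i = Nl ^ (i - r M) * Nl ^ (r M) := by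
        rw [← pow_add]; congr 1; omega
      rw [hpow, Module.End.mul_apply, hr M, map_zero]
  have hdlt : d < r M := by
    rcases eq_or_lt_of_le hdle with heq | h
    · exact absurd (heq ▸ hr M) hdP
    · exact h
  have hρM : ρ M ≠ 0 := (hpos M).ne'
  -- the eigenvector
  set w : E := (ρ M ^ d)⁻¹ • (Nl ^ d) (x M) with hwdef
  have hw0 : w ≠ 0 := smul_ne_zero (inv_ne_zero (pow_ne_zero _ hρM)) hdP
  have hLw : L w = ρ M • w := by
    have hNv : Nl ((Nl ^ d) (x M)) = 0 := by
      have h1 : (Nl ^ (d + 1)) (x M) = Nl ((Nl ^ d) (x M)) := by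
        rw [pow_succ']; rfl
      rw [← h1]; exact hzero (d + 1) (Nat.lt_succ_self d)
    have hLu : L ((Nl ^ d) (x M)) = ρ M • (Nl ^ d) (x M) := by
      have : Nl ((Nl ^ d) (x M)) =
          L ((Nl ^ d) (x M)) - ρ M • (Nl ^ d) (x M) := by
        simp [hNldef, LinearMap.sub_apply, LinearMap.smul_apply]
      rw [this] at hNv
      linear_combination (norm := module) hNv
    rw [hwdef, map_smul, hLu, smul_comm]
  -- the coefficient sequences and their limits
  set nvec : Fin N → ℕ → E := fun j i => ((L - ρ j • (1 : E →ₗ[ℝ] E)) ^ i) (x j) with hnvec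
  set c : Fin N → ℕ → ℕ → ℝ := fun j i k =>
    ((k.choose d : ℝ) * ρ M ^ k)⁻¹ * ((k.choose i : ℝ) * ρ j ^ (k - i)) with hcdef
  set l : Fin N → ℕ → ℝ := fun j i => if j = M ∧ i = d then (ρ M ^ d)⁻¹ else 0 with hldef
  have hident : ∀ k : ℕ, ((k.choose d : ℝ) * ρ M ^ k)⁻¹ • (L ^ k) (∑ j, x j)
      = ∑ j, ∑ i ∈ Finset.range (r j), c j i k • nvec j i := by
    intro k
    rw [map_sum, Finset.smul_sum]
    refine Finset.sum_congr rfl fun j _ => ?_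
    rw [binom_expand L (ρ j) (r j) (x j) (hr j) k, Finset.smul_sum]
    refine Finset.sum_congr rfl fun i _ => ?_
    rw [smul_smul]
  have htend : ∀ j : Fin N, ∀ i ∈ Finset.range (r j),
      Tendsto (fun k => c j i k • nvec j i) atTop (nhds (l j i • nvec j i)) := by
    intro j i hi
    rcases lt_trichotomy j M with hjM | heq | hjM
    · -- smaller eigenvalue
      have hl : l j i = 0 := by simp [hldef, hjM.ne]
      rw [hl, zero_smul]
      have := (tendsto_small_eig (hpos j) (hmono hjM) i d).smul_const (nvec j i)
      simpa [hcdef] using this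
    · have heq' : M = j := heq.symm
      subst heq'
      rcases lt_trichotomy i d with hid | rfl | hid
      · -- lower nilpotent order
        have hl : l M i = 0 := by simp [hldef, hid.ne]
        rw [hl, zero_smul]
        have hev : ∀ᶠ k in atTop, c M i k
            = ((k.choose i : ℝ) / (k.choose d)) * (ρ M ^ i)⁻¹ := by
          filter_upwards [eventually_ge_atTop i] with k hk
          rw [hcdef]
          simp only
          rw [pow_sub₀ _ hρM hk]
          by_cases hC : ((k.choose d : ℕ) : ℝ) = 0
          · simp [hC]
          · field_simp
        have hlim : Tendsto (fun k => c M i k) atTop (nhds 0) := by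
          have := (tendsto_choose_ratio hid).mul_const ((ρ M ^ i)⁻¹)
          rw [zero_mul] at this
          exact this.congr' (hev.mono fun k hk => hk.symm)
        simpa using hlim.smul_const (nvec M i)
      · -- the dominant term
        have hl : l M d = (ρ M ^ d)⁻¹ := by simp [hldef]
        rw [hl]
        have hev : ∀ᶠ k in atTop, c M d k = (ρ M ^ d)⁻¹ := by
          filter_upwards [eventually_ge_atTop d] with k hk
          have hC : ((k.choose d : ℕ) : ℝ) ≠ 0 := by
            exact_mod_cast (Nat.choose_pos hk).ne'
          rw [hcdef]
          simp only
          rw [pow_sub₀ _ hρM hk]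
          field_simp
        have hlim : Tendsto (fun k => c M d k) atTop (nhds ((ρ M ^ d)⁻¹)) :=
          tendsto_const_nhds.congr' (hev.mono fun k hk => hk.symm)
        exact hlim.smul_const (nvec M d)
      · -- higher nilpotent order : the vector vanishes
        have hnv : nvec M i = 0 := hzero i hid
        rw [hnv]
        simp only [smul_zero]
        exact tendsto_const_nhds
    · -- indices above M : the vector vanishes
      have hnv : nvec j i = 0 := by
        rw [hnvec]; simp [htop j hjM]
      rw [hnv]
      simp only [smul_zero]
      exact tendsto_const_nhds
  have hsum : Tendsto (fun k : ℕ => ((k.choose d : ℝ) * ρ M ^ k)⁻¹ • (L ^ k) (∑ j, x j))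
      atTop (nhds (∑ j, ∑ i ∈ Finset.range (r j), l j i • nvec j i)) := by
    have := tendsto_finset_sum (Finset.univ : Finset (Fin N))
      (fun j _ => tendsto_finset_sum (Finset.range (r j)) (fun i hi => htend j i hi))
    exact this.congr fun k => (hident k).symm
  have hW : ∑ j, ∑ i ∈ Finset.range (r j), l j i • nvec j i = w := by
    have hinner : ∀ j : Fin N, ∑ i ∈ Finset.range (r j), l j i • nvec j i
        = if j = M then w else 0 := by
      intro j
      by_cases hj : j = M
      · subst hj
        rw [if_pos rfl]
        rw [Finset.sum_eq_single_of_mem d (Finset.mem_range.2 hdlt)]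
        · simp [hldef, hwdef, hnvec, hNldef]
        · intro i _ hid
          simp [hldef, hid]
      · rw [if_neg hj]
        apply Finset.sum_eq_zero
        intro i _
        simp [hldef, hj]
    rw [Finset.sum_congr rfl fun j _ => hinner j]
    simp
  exact ⟨d, w, hw0, hLw, hW ▸ hsum⟩
end

section
/- Let A ∈ ℝ^{n×n} and r ≥ 0. Let λ_1, ..., λ_N (N ≥ 0) be exactly the real eigenvalues of A lying in (r, +∞) that have odd algebraic multiplicity, and for each j let v_j be an eigenvector of A for λ_j. Then for every ε > 0 there exists a matrix Ã ∈ ℝ^{n×n} with ‖A − Ã‖ < ε such that: the real eigenvalues of Ã in (r, +∞) are exactly λ_1, ..., λ_N; each λ_j is a simple eigenvalue of Ã (algebraic multiplicity one); and for each j the eigenspace of Ã for λ_j is spanned by v_j. -/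
set_option linter.unusedSectionVars false
set_option maxHeartbeats 1000000

open Polynomial

attribute [local instance] Matrix.linftyOpNormedAddCommGroup
attribute [local instance] Matrix.linftyOpNormedSpace

namespace TPP
variable {ι κ η ι₂ : Type} [Fintype ι] [DecidableEq ι] [Fintype κ] [DecidableEq κ]
  [Fintype η] [DecidableEq η] [Fintype ι₂] [DecidableEq ι₂]

lemma eval_charpoly (M : Matrix ι ι ℝ) (ρ : ℝ) :
    (M.charpoly).eval ρ = (ρ • (1 : Matrix ι ι ℝ) - M).det := by
  rw [Matrix.charpoly, ← Polynomial.coe_evalRingHom, RingHom.map_det]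
  congr 1
  ext i j
  by_cases h : i = j
  · subst h; simp [Matrix.charmatrix_apply_eq, Matrix.one_apply]
  · simp [Matrix.charmatrix_apply_ne _ _ _ h, Matrix.one_apply_ne h]

lemma exists_eigenvector {M : Matrix ι ι ℝ} {μ : ℝ} (h : M.charpoly.IsRoot μ) :
    ∃ u, u ≠ 0 ∧ M.mulVec u = μ • u := by
  have hdet : (μ • (1 : Matrix ι ι ℝ) - M).det = 0 := by
    rw [← eval_charpoly]; exact h
  obtain ⟨u, hu0, hu⟩ := (Matrix.exists_mulVec_eq_zero_iff).2 hdet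
  refine ⟨u, hu0, ?_⟩
  rw [Matrix.sub_mulVec, sub_eq_zero] at hu
  rw [← hu, Matrix.smul_mulVec, Matrix.one_mulVec]

lemma vec_eq_zero_of_det_ne {M : Matrix ι ι ℝ} (h : M.det ≠ 0) {x : ι → ℝ}
    (hx : M.mulVec x = 0) : x = 0 := by
  by_contra hx0
  exact h (Matrix.exists_mulVec_eq_zero_iff.1 ⟨x, hx0, hx⟩)

lemma charpoly_conj_sq (P M : Matrix ι ι ℝ) {Q : Matrix ι ι ℝ} (h1 : P * Q = 1) :
    (P * M * Q).charpoly = M.charpoly := by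
  have h2 : Q * P = 1 := mul_eq_one_comm.mp h1
  have hc : (P.map C) * Matrix.charmatrix M * (Q.map C) = Matrix.charmatrix (P * M * Q) := by
    rw [Matrix.charmatrix, Matrix.charmatrix, Matrix.mul_sub, Matrix.sub_mul]
    congr 1
    · rw [Matrix.scalar_apply, ← Matrix.smul_one_eq_diagonal, Matrix.mul_smul,
        Matrix.smul_mul, Matrix.mul_one, ← Matrix.map_mul, h1]
      simp [Matrix.smul_one_eq_diagonal]
    · rw [RingHom.mapMatrix_apply, RingHom.mapMatrix_apply, ← Matrix.map_mul, ← Matrix.map_mul]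
  rw [Matrix.charpoly, ← hc, Matrix.det_mul, Matrix.det_mul, Matrix.charpoly,
    mul_comm ((P.map ⇑C).det), mul_assoc, ← Matrix.det_mul, ← Matrix.map_mul, h1]
  simp

lemma charpoly_conj (P : Matrix ι κ ℝ) (Q : Matrix κ ι ℝ) (M : Matrix κ κ ℝ)
    (h1 : P * Q = 1) (h2 : Q * P = 1) : (P * M * Q).charpoly = M.charpoly := by
  have hcard : Fintype.card κ = Fintype.card ι := by
    have h := Matrix.trace_mul_comm P Q
    rw [h1, h2, Matrix.trace_one, Matrix.trace_one] at h
    exact_mod_cast h.symm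
  obtain e : κ ≃ ι := Fintype.equivOfCardEq hcard
  have hMM : (M.submatrix ⇑e.symm ⇑e.symm).charpoly = M.charpoly := by
    have := Matrix.charpoly_reindex (e : κ ≃ ι) M
    simpa [Matrix.reindex_apply] using this
  have hmul : P.submatrix id ⇑e.symm * M.submatrix ⇑e.symm ⇑e.symm * Q.submatrix ⇑e.symm id
      = P * M * Q := by
    rw [Matrix.submatrix_mul_equiv, Matrix.submatrix_mul_equiv, Matrix.submatrix_id_id]
  have h1' : P.submatrix id ⇑e.symm * Q.submatrix ⇑e.symm id = 1 := by
    rw [Matrix.submatrix_mul_equiv, Matrix.submatrix_id_id, h1]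
  rw [← hmul, charpoly_conj_sq _ _ h1', hMM]


noncomputable def Pmat (b : Module.Basis κ ℝ (ι → ℝ)) : Matrix ι κ ℝ := fun i k => b k i
noncomputable def Qmat (b : Module.Basis κ ℝ (ι → ℝ)) : Matrix κ ι ℝ :=
  fun k i => b.repr (Pi.single i 1) k

lemma Pmat_mulVec (b : Module.Basis κ ℝ (ι → ℝ)) (x : κ → ℝ) :
    (Pmat b).mulVec x = ∑ k, x k • b k := by
  ext i
  simp [Pmat, Matrix.mulVec, dotProduct, Finset.sum_apply, mul_comm]

lemma Qmat_mulVec (b : Module.Basis κ ℝ (ι → ℝ)) (w : ι → ℝ) :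
    (Qmat b).mulVec w = fun k => b.repr w k := by
  ext k
  have hw : w = ∑ i, w i • (Pi.single i 1 : ι → ℝ) := by
    ext i'; simp [Pi.single_apply]
  calc (Qmat b).mulVec w k = ∑ i, w i * b.repr (Pi.single i 1) k := by
        simp [Qmat, Matrix.mulVec, dotProduct, mul_comm]
    _ = b.repr (∑ i, w i • (Pi.single i 1 : ι → ℝ)) k := by
        rw [map_sum]; simp [Finsupp.finset_sum_apply]
    _ = b.repr w k := by rw [← hw]

lemma Pmat_Qmat_mulVec (b : Module.Basis κ ℝ (ι → ℝ)) (w : ι → ℝ) :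
    (Pmat b).mulVec ((Qmat b).mulVec w) = w := by
  rw [Qmat_mulVec, Pmat_mulVec]
  exact_mod_cast b.sum_repr w

lemma Qmat_Pmat_mulVec (b : Module.Basis κ ℝ (ι → ℝ)) (x : κ → ℝ) :
    (Qmat b).mulVec ((Pmat b).mulVec x) = x := by
  rw [Pmat_mulVec, Qmat_mulVec]
  ext k
  rw [map_sum]
  simp [Finsupp.finset_sum_apply, b.repr_self_apply, Finsupp.single_apply, Finset.sum_ite_eq' Finset.univ k]

lemma mat_eq_of_mulVec {M N : Matrix ι κ ℝ} (h : ∀ x, M.mulVec x = N.mulVec x) : M = N := by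
  ext i k
  have := congrFun (h (Pi.single k 1)) i
  simpa [Matrix.mulVec_single] using this

lemma Pmat_Qmat (b : Module.Basis κ ℝ (ι → ℝ)) : Pmat b * Qmat b = 1 := by
  apply mat_eq_of_mulVec
  intro x
  rw [← Matrix.mulVec_mulVec, Pmat_Qmat_mulVec, Matrix.one_mulVec]

lemma Qmat_Pmat (b : Module.Basis κ ℝ (ι → ℝ)) : Qmat b * Pmat b = 1 := by
  apply mat_eq_of_mulVec
  intro x
  rw [← Matrix.mulVec_mulVec, Qmat_Pmat_mulVec, Matrix.one_mulVec]

lemma Pmat_single (b : Module.Basis κ ℝ (ι → ℝ)) (k : κ) :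
    (Pmat b).mulVec (Pi.single k 1) = b k := by
  rw [Pmat_mulVec]
  rw [Finset.sum_eq_single k] <;> simp +contextual [Pi.single_apply]

/-- Extend a linearly independent family to a basis indexed by a sum type. -/
lemma exists_basis_sum (v : η → (ι → ℝ)) (hli : LinearIndependent ℝ v) :
    ∃ (ι₂ : Type) (_ : Fintype ι₂) (_ : DecidableEq ι₂) (b : Module.Basis (η ⊕ ι₂) ℝ (ι → ℝ)),
      (∀ j, b (Sum.inl j) = v j) ∧ Fintype.card η + Fintype.card ι₂ = Fintype.card ι := by
  classical
  let b := Module.Basis.sumExtend hli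
  haveI : Fintype (η ⊕ Module.Basis.sumExtendIndex hli) := FiniteDimensional.fintypeBasisIndex b
  haveI : Fintype (Module.Basis.sumExtendIndex hli) := Fintype.ofInjective (Sum.inr : _ → η ⊕ Module.Basis.sumExtendIndex hli) Sum.inr_injective
  refine ⟨Module.Basis.sumExtendIndex hli, inferInstance, Classical.decEq _, b, ?_, ?_⟩
  · intro j
    simp only [b, Module.Basis.sumExtend, Module.Basis.reindex_apply, Equiv.symm_symm]
    rw [Module.Basis.extend_apply_self]
    show ((((Equiv.ofInjective v hli.injective).sumCongr (Equiv.refl _)).trans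
      (Equiv.Set.sumDiffSubset (hli.linearIndepOn_id.subset_extend _))) (Sum.inl j) : ι → ℝ) = v j
    rw [Equiv.trans_apply, Equiv.sumCongr_apply, Sum.map_inl, Equiv.Set.sumDiffSubset_apply_inl]
    simp
  · have h1 : Fintype.card (η ⊕ Module.Basis.sumExtendIndex hli) = Fintype.card ι := by
      rw [← Module.finrank_eq_card_basis b]
      simp [Module.finrank_fintype_fun_eq_card]
    rw [← h1]
    have := Fintype.card_sum (α := η) (β := Module.Basis.sumExtendIndex hli)
    convert this.symm using 2
  

lemma conj_blocks (b : Module.Basis (η ⊕ ι₂) ℝ (ι → ℝ)) (A : Matrix ι ι ℝ) (D : Matrix η η ℝ)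
    (hA : ∀ j, A.mulVec (b (Sum.inl j)) = ∑ i, D i j • b (Sum.inl i)) :
    ∃ (B : Matrix η ι₂ ℝ) (Cm : Matrix ι₂ ι₂ ℝ),
      A = Pmat b * Matrix.fromBlocks D B 0 Cm * Qmat b := by
  set M := Qmat b * (A * Pmat b) with hM
  have hcol : ∀ j a, M a (Sum.inl j) = Sum.elim (fun i => D i j) 0 a := by
    intro j a
    have h2 : M.mulVec (Pi.single (Sum.inl j) 1)
        = fun k => b.repr (∑ i, D i j • b (Sum.inl i)) k := by
      rw [hM, ← Matrix.mulVec_mulVec, ← Matrix.mulVec_mulVec, Pmat_single, hA j, Qmat_mulVec]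
    have h3 := congrFun h2 a
    rw [Matrix.mulVec_single] at h3
    simp only [MulOpposite.op_one, one_smul, Matrix.col_apply] at h3
    rw [h3, map_sum]
    simp only [map_smul, Finsupp.coe_smul, Finsupp.coe_finset_sum, Finset.sum_apply,
      Pi.smul_apply, b.repr_self_apply, smul_eq_mul]
    cases a with
    | inl i =>
        rw [Finset.sum_eq_single i] <;> simp +contextual [Sum.inl.injEq]
    | inr a => simp
  have h21 : M.toBlocks₂₁ = 0 := by
    ext a j
    have := hcol j (Sum.inr a)
    simpa [Matrix.toBlocks₂₁] using this
  have h11 : M.toBlocks₁₁ = D := by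
    ext i j
    have := hcol j (Sum.inl i)
    simpa [Matrix.toBlocks₁₁] using this
  refine ⟨M.toBlocks₁₂, M.toBlocks₂₂, ?_⟩
  have hMf : Matrix.fromBlocks D M.toBlocks₁₂ 0 M.toBlocks₂₂ = M := by
    rw [← h11, ← h21, Matrix.fromBlocks_toBlocks]
  rw [hMf, hM]
  rw [show Pmat b * (Qmat b * (A * Pmat b)) * Qmat b
      = (Pmat b * Qmat b) * A * (Pmat b * Qmat b) from by simp only [Matrix.mul_assoc], Pmat_Qmat]
  simp

lemma charpoly_diagonal (d : η → ℝ) :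
    (Matrix.diagonal d).charpoly = ∏ i, (X - C (d i)) := by
  have : Matrix.charmatrix (Matrix.diagonal d) = Matrix.diagonal (fun i => X - C (d i)) := by
    ext i j
    by_cases h : i = j
    · subst h; simp
    · simp [Matrix.charmatrix_apply_ne _ _ _ h, Matrix.diagonal_apply_ne _ h]
  rw [Matrix.charpoly, this, Matrix.det_diagonal]

lemma rootMult_prod (lam : η → ℝ) (hinj : Function.Injective lam) (ρ : ℝ) :
    (∏ i, (X - C (lam i))).rootMultiplicity ρ = if ∃ j, lam j = ρ then 1 else 0 := by
  by_cases h : ∃ j, lam j = ρ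
  · obtain ⟨j, hj⟩ := h
    rw [if_pos ⟨j, hj⟩, ← Finset.mul_prod_erase Finset.univ _ (Finset.mem_univ j)]
    have hne : (∏ i ∈ Finset.univ.erase j, (X - C (lam i))) ≠ 0 :=
      Finset.prod_ne_zero_iff.2 fun i _ => X_sub_C_ne_zero _
    rw [rootMultiplicity_mul (mul_ne_zero (X_sub_C_ne_zero _) hne)]
    rw [hj, rootMultiplicity_X_sub_C_self]
    have : (∏ i ∈ Finset.univ.erase j, (X - C (lam i))).rootMultiplicity ρ = 0 := by
      apply rootMultiplicity_eq_zero
      simp only [IsRoot, eval_prod, eval_sub, eval_X, eval_C]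
      apply Finset.prod_ne_zero_iff.2
      intro i hi
      rw [sub_ne_zero]
      intro hc
      exact (Finset.mem_erase.1 hi).1 (hinj (by rw [hj, hc]))
    omega
  · rw [if_neg h]
    apply rootMultiplicity_eq_zero
    simp only [IsRoot, eval_prod, eval_sub, eval_X, eval_C]
    apply Finset.prod_ne_zero_iff.2
    intro i _
    rw [sub_ne_zero]
    exact fun hc => h ⟨i, hc.symm⟩

lemma charpoly_T (μ t s : ℝ) : (!![μ, t; s, μ] : Matrix (Fin 2) (Fin 2) ℝ).charpoly
    = (X - C μ) * (X - C μ) - C t * C s := by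
  rw [Matrix.charpoly, Matrix.det_fin_two]
  simp [Matrix.charmatrix_apply_eq, Matrix.charmatrix_apply_ne]

lemma key (r : ℝ) : ∀ (m : ℕ) (ι : Type) [Fintype ι] [DecidableEq ι] (M : Matrix ι ι ℝ),
    Fintype.card ι ≤ m →
    (∀ ρ : ℝ, r < ρ → Even (M.charpoly.rootMultiplicity ρ)) →
    ∀ ε : ℝ, 0 < ε → ∃ M' : Matrix ι ι ℝ, ‖M - M'‖ < ε ∧
      ∀ ρ : ℝ, r < ρ → ¬ M'.charpoly.IsRoot ρ := by
  intro m
  induction m using Nat.strong_induction_on with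
  | _ m IH =>
  intro ι _ _ M hcard heven ε hε
  by_cases hroot : ∃ μ, r < μ ∧ M.charpoly.IsRoot μ
  swap
  · exact ⟨M, by simpa using hε, fun ρ hρ h => hroot ⟨ρ, hρ, h⟩⟩
  obtain ⟨μ, hμr, hμ⟩ := hroot
  -- first peel
  obtain ⟨u, hu0, huv⟩ := exists_eigenvector hμ
  have hliu : LinearIndependent ℝ (fun _ : Unit => u) := linearIndependent_unique_iff.2 hu0
  obtain ⟨ι₂, _, _, b₁, hb₁, hcard₁⟩ := exists_basis_sum _ hliu
  have hA1 : ∀ j : Unit, M.mulVec (b₁ (Sum.inl j))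
      = ∑ i : Unit, (Matrix.diagonal (fun _ : Unit => μ)) i j • b₁ (Sum.inl i) := by
    intro j
    rw [hb₁]
    simp only [Finset.univ_unique, Finset.sum_singleton, Matrix.diagonal_apply_eq, hb₁]
    exact huv
  obtain ⟨B₁, M₁, hM1⟩ := conj_blocks b₁ M _ hA1
  have hcp1 : M.charpoly = (X - C μ) * M₁.charpoly := by
    rw [hM1, charpoly_conj _ _ _ (Pmat_Qmat b₁) (Qmat_Pmat b₁),
      Matrix.charpoly_fromBlocks_zero₂₁, charpoly_diagonal]
    simp
  have hne1 : (X - C μ) * M₁.charpoly ≠ 0 :=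
    mul_ne_zero (X_sub_C_ne_zero μ) (Matrix.charpoly_monic M₁).ne_zero
  have hμroot1 : M₁.charpoly.IsRoot μ := by
    have he := heven μ hμr
    rw [hcp1, rootMultiplicity_mul hne1, rootMultiplicity_X_sub_C_self] at he
    have h0 : M₁.charpoly.rootMultiplicity μ ≠ 0 := by
      intro h0
      rw [h0, Nat.even_iff] at he
      omega
    exact (rootMultiplicity_pos (Matrix.charpoly_monic M₁).ne_zero).mp (Nat.pos_of_ne_zero h0)
  -- second generalized eigenvector
  obtain ⟨y, hy0, hyv⟩ := exists_eigenvector hμroot1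
  set u₂ : ι → ℝ := (Pmat b₁).mulVec (Sum.elim 0 y) with hu₂
  set c : ℝ := B₁.mulVec y () with hc
  have hMu₂ : M.mulVec u₂ = c • u + μ • u₂ := by
    have hsimp : (Matrix.fromBlocks (Matrix.diagonal fun _ : Unit => μ) B₁ 0 M₁).mulVec
        (Sum.elim (0 : Unit → ℝ) y)
        = c • (Pi.single (Sum.inl ()) 1 : Unit ⊕ ι₂ → ℝ) + μ • Sum.elim (0 : Unit → ℝ) y := by
      rw [Matrix.fromBlocks_mulVec]
      funext a
      cases a with
      | inl a =>
        simp [hyv, hc, Pi.single_apply]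
      | inr a =>
        simp [hyv, hc, Pi.single_apply]
    rw [hu₂, hM1, ← Matrix.mulVec_mulVec, ← Matrix.mulVec_mulVec,
      Qmat_Pmat_mulVec, hsimp, Matrix.mulVec_add, Matrix.mulVec_smul, Matrix.mulVec_smul,
      Pmat_single, hb₁]
  have hu₂0 : u₂ ≠ 0 := by
    intro h
    apply hy0
    have hx : Sum.elim (0 : Unit → ℝ) y = 0 := by
      rw [← Qmat_Pmat_mulVec b₁ (Sum.elim 0 y), ← hu₂, h, Matrix.mulVec_zero]
    funext a
    exact congrFun hx (Sum.inr a)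
  have hrepru₂ : ∀ k, b₁.repr u₂ k = Sum.elim (0 : Unit → ℝ) y k := by
    intro k
    have h1 := congrFun (Qmat_mulVec b₁ u₂) k
    rw [hu₂, Qmat_Pmat_mulVec] at h1
    rw [hu₂]
    exact h1.symm
  have hpair : LinearIndependent ℝ ![u, u₂] := by
    rw [linearIndependent_fin2]
    refine ⟨hu₂0, fun a hau => ?_⟩
    simp only [Matrix.cons_val_zero, Matrix.cons_val_one, Matrix.head_cons] at hau
    have h1 : b₁.repr u (Sum.inl ()) = 1 := by
      rw [← hb₁ ()]
      simp [Module.Basis.repr_self]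
    rw [← hau, map_smul] at h1
    simp only [Finsupp.coe_smul, Pi.smul_apply, smul_eq_mul] at h1
    rw [hrepru₂] at h1
    simp at h1
  obtain ⟨ι₃, _, _, b₂, hb₂, hcard₂⟩ := exists_basis_sum ![u, u₂] hpair
  set T : Matrix (Fin 2) (Fin 2) ℝ := !![μ, c; 0, μ] with hT
  have hA2 : ∀ j, M.mulVec (b₂ (Sum.inl j)) = ∑ i, T i j • b₂ (Sum.inl i) := by
    rw [Fin.forall_fin_two]
    constructor
    · rw [Fin.sum_univ_two, hb₂ 0, hb₂ 1]
      simp only [Matrix.cons_val_zero, Matrix.cons_val_one, Matrix.head_cons]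
      rw [huv, hT]
      simp
    · rw [Fin.sum_univ_two, hb₂ 0, hb₂ 1]
      simp only [Matrix.cons_val_zero, Matrix.cons_val_one, Matrix.head_cons]
      rw [hMu₂, hT]
      simp [add_comm]
  obtain ⟨B₂, M₂, hM2⟩ := conj_blocks b₂ M T hA2
  have hcp2 : M.charpoly = ((X - C μ) * (X - C μ)) * M₂.charpoly := by
    rw [hM2, charpoly_conj _ _ _ (Pmat_Qmat b₂) (Qmat_Pmat b₂),
      Matrix.charpoly_fromBlocks_zero₂₁, charpoly_T]
    simp
  have hne2 : ((X - C μ) * (X - C μ)) * M₂.charpoly ≠ 0 :=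
    mul_ne_zero (mul_ne_zero (X_sub_C_ne_zero μ) (X_sub_C_ne_zero μ))
      (Matrix.charpoly_monic M₂).ne_zero
  have heven₂ : ∀ ρ : ℝ, r < ρ → Even (M₂.charpoly.rootMultiplicity ρ) := by
    intro ρ hρ
    have he := heven ρ hρ
    rw [hcp2, rootMultiplicity_mul hne2,
      rootMultiplicity_mul (mul_ne_zero (X_sub_C_ne_zero μ) (X_sub_C_ne_zero μ))] at he
    have hXC : ∀ a b : ℝ, ((X - C a : ℝ[X]).rootMultiplicity b) = if b = a then 1 else 0 := by
      intro a b
      by_cases hab : b = a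
      · subst hab; simp [rootMultiplicity_X_sub_C_self]
      · rw [if_neg hab]
        exact rootMultiplicity_eq_zero (by simp [IsRoot, sub_ne_zero, hab])
    simp only [hXC] at he
    rw [Nat.even_iff] at he ⊢
    by_cases hρμ : ρ = μ <;> simp [hρμ] at he ⊢ <;> omega
  have hcardι₃ : Fintype.card ι₃ < m := by
    simp only [Fintype.card_fin] at hcard₂
    omega
  -- continuous linear map for the norm bound
  set G : Matrix (Fin 2) (Fin 2) ℝ := if c = 0 then !![0,-1;1,0] else !![0,0;c,0] with hG
  set f : (ℝ × Matrix ι₃ ι₃ ℝ) →ₗ[ℝ] Matrix ι ι ℝ :=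
    { toFun := fun p => Pmat b₂ * (Matrix.fromBlocks (p.1 • G) 0 0 p.2) * Qmat b₂
      map_add' := by
        intro p q
        rw [Prod.fst_add, Prod.snd_add, add_smul]
        rw [show Matrix.fromBlocks (p.1 • G + q.1 • G) (0:Matrix (Fin 2) ι₃ ℝ)
            (0:Matrix ι₃ (Fin 2) ℝ) (p.2 + q.2)
            = Matrix.fromBlocks (p.1 • G) 0 0 p.2 + Matrix.fromBlocks (q.1 • G) 0 0 q.2 from by
          rw [Matrix.fromBlocks_add]; simp]
        rw [Matrix.mul_add, Matrix.add_mul]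
      map_smul' := by
        intro s p
        rw [Prod.smul_fst, Prod.smul_snd, smul_assoc]
        rw [show Matrix.fromBlocks (s • p.1 • G) (0:Matrix (Fin 2) ι₃ ℝ)
            (0:Matrix ι₃ (Fin 2) ℝ) (s • p.2)
            = s • Matrix.fromBlocks (p.1 • G) 0 0 p.2 from by
          rw [Matrix.fromBlocks_smul]; simp]
        rw [Matrix.mul_smul, Matrix.smul_mul]
        rfl } with hf
  set L := LinearMap.toContinuousLinearMap f with hL
  set K : ℝ := @norm _ (@ContinuousLinearMap.hasOpNorm ℝ ℝ _ _ _ _ _ _ _ _ _) L with hK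
  have hK0 : 0 ≤ K := norm_nonneg _
  set δ : ℝ := ε / (2 * (K + 1)) with hδ
  have hδ0 : 0 < δ := by positivity
  obtain ⟨M₂', hM₂norm, hM₂roots⟩ := IH (Fintype.card ι₃) hcardι₃ ι₃ M₂ le_rfl heven₂ δ hδ0
  set T' : Matrix (Fin 2) (Fin 2) ℝ := T - δ • G with hT'
  refine ⟨Pmat b₂ * Matrix.fromBlocks T' B₂ 0 M₂' * Qmat b₂, ?_, ?_⟩
  · have hFB : Matrix.fromBlocks T B₂ 0 M₂ - Matrix.fromBlocks T' B₂ 0 M₂'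
        = Matrix.fromBlocks (T - T') 0 0 (M₂ - M₂') := by
      ext (i|i) (j|j) <;> simp [Matrix.fromBlocks]
    have hdiff : M - Pmat b₂ * Matrix.fromBlocks T' B₂ 0 M₂' * Qmat b₂ = f (δ, M₂ - M₂') := by
      conv_lhs => rw [hM2]
      rw [← Matrix.sub_mul, ← Matrix.mul_sub, hFB, hT', sub_sub_cancel]
      rfl
    rw [hdiff]
    have hb := L.le_opNorm (δ, M₂ - M₂')
    have hnorm : ‖((δ, M₂ - M₂') : ℝ × Matrix ι₃ ι₃ ℝ)‖ ≤ δ := by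
      rw [Prod.norm_def]
      apply max_le
      · rw [Real.norm_eq_abs, abs_of_pos hδ0]
      · exact le_of_lt hM₂norm
    have h2 : ‖L (δ, M₂ - M₂')‖ ≤ K * δ := le_trans hb (by
      apply mul_le_mul_of_nonneg_left hnorm hK0)
    calc ‖f (δ, M₂ - M₂')‖ = ‖L (δ, M₂ - M₂')‖ := by rw [hL]; rfl
      _ ≤ K * δ := h2
      _ = ε * (K / (2 * (K + 1))) := by rw [hδ]; ring
      _ < ε * 1 := by
          apply mul_lt_mul_of_pos_left _ hε
          rw [div_lt_one (by positivity)]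
          linarith
      _ = ε := mul_one ε
  · intro ρ hρ hisroot
    have hcp3 : (Pmat b₂ * Matrix.fromBlocks T' B₂ 0 M₂' * Qmat b₂).charpoly
        = T'.charpoly * M₂'.charpoly := by
      rw [charpoly_conj _ _ _ (Pmat_Qmat b₂) (Qmat_Pmat b₂), Matrix.charpoly_fromBlocks_zero₂₁]
    rw [IsRoot, hcp3, eval_mul, mul_eq_zero] at hisroot
    have hT'eq : T' = !![μ, c - δ * G 0 1; -(δ * G 1 0), μ] := by
      have hG00 : G 0 0 = 0 := by rw [hG]; split_ifs <;> simp
      have hG11 : G 1 1 = 0 := by rw [hG]; split_ifs <;> simp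
      ext i j
      rw [hT']
      fin_cases i <;> fin_cases j <;>
        simp [hT, hG00, hG11, Matrix.sub_apply, Matrix.smul_apply] <;> ring
    have hts : (c - δ * G 0 1) * (-(δ * G 1 0)) < 0 := by
      rw [hG]
      by_cases hc0 : c = 0
      · simp [hc0]
        nlinarith
      · simp [hc0]
        nlinarith [sq_nonneg c, mul_pos hδ0 (mul_pos hδ0 (mul_self_pos.mpr hc0))]
    rcases hisroot with h | h
    · rw [hT'eq, charpoly_T] at h
      simp only [eval_sub, eval_mul, eval_X, eval_C] at h
      nlinarith [sq_nonneg (ρ - μ)]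
    · exact hM₂roots ρ hρ h


end TPP

open TPP in
/-- Given a real matrix `A`, a threshold `r ≥ 0`, and eigenvectors `v j` for the
eigenvalues `lam j`, which are exactly the real eigenvalues of `A` in `(r, ∞)` of odd
algebraic multiplicity, there are arbitrarily small perturbations `Ã` of `A` whose real
eigenvalues in `(r, ∞)` are exactly the `lam j`, each being simple with eigenspace
spanned by `v j`. -/
theorem trapped_point_perturbation
    (n N : ℕ) (A : Matrix (Fin n) (Fin n) ℝ) (r : ℝ) (hr : 0 ≤ r)
    (lam : Fin N → ℝ) (hinj : Function.Injective lam)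
    (hlam : ∀ ρ : ℝ,
      (r < ρ ∧ Odd ((Matrix.charpoly A).rootMultiplicity ρ)) ↔ ∃ j, lam j = ρ)
    (v : Fin N → Fin n → ℝ) (hv0 : ∀ j, v j ≠ 0)
    (hv : ∀ j, A.mulVec (v j) = lam j • v j) :
    ∀ ε > 0, ∃ Atld : Matrix (Fin n) (Fin n) ℝ, ‖A - Atld‖ < ε ∧
      (∀ ρ : ℝ, r < ρ → ((Matrix.charpoly Atld).IsRoot ρ ↔ ∃ j, lam j = ρ)) ∧
      (∀ j, (Matrix.charpoly Atld).rootMultiplicity (lam j) = 1) ∧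
      (∀ j, ∀ w : Fin n → ℝ, Atld.mulVec w = lam j • w ↔ ∃ c : ℝ, w = c • v j) := by
  intro ε hε
  classical
  have hli : LinearIndependent ℝ v := by
    apply Module.End.eigenvectors_linearIndependent' (Matrix.mulVecLin A) lam hinj v
    intro j
    refine ⟨Module.End.mem_eigenspace_iff.mpr ?_, hv0 j⟩
    simpa [Matrix.mulVecLin_apply] using hv j
  obtain ⟨ι₂, _, _, b, hb, hcardb⟩ := exists_basis_sum v hli
  have hA : ∀ j, A.mulVec (b (Sum.inl j)) = ∑ i, (Matrix.diagonal lam) i j • b (Sum.inl i) := by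
    intro j
    rw [hb j, hv j, Finset.sum_eq_single j]
    · rw [Matrix.diagonal_apply_eq, hb j]
    · intro i _ hij
      rw [Matrix.diagonal_apply_ne _ hij, zero_smul]
    · simp
  obtain ⟨B, Cm, hAconj⟩ := conj_blocks b A (Matrix.diagonal lam) hA
  have hpq := Pmat_Qmat b
  have hqp := Qmat_Pmat b
  have hcpA : A.charpoly = (∏ i, (X - C (lam i))) * Cm.charpoly := by
    rw [hAconj, charpoly_conj _ _ _ hpq hqp, Matrix.charpoly_fromBlocks_zero₂₁,
      charpoly_diagonal]
  have hprodne : (∏ i, (X - C (lam i))) ≠ 0 :=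
    Finset.prod_ne_zero_iff.2 fun i _ => X_sub_C_ne_zero _
  have hCmne := (Matrix.charpoly_monic Cm).ne_zero
  have hmultA : ∀ ρ, A.charpoly.rootMultiplicity ρ
      = (if ∃ j, lam j = ρ then 1 else 0) + Cm.charpoly.rootMultiplicity ρ := by
    intro ρ
    rw [hcpA, rootMultiplicity_mul (mul_ne_zero hprodne hCmne), rootMult_prod lam hinj]
    congr
  have hevenC : ∀ ρ, r < ρ → Even (Cm.charpoly.rootMultiplicity ρ) := by
    intro ρ hρ
    by_cases hex : ∃ j, lam j = ρ
    · have hodd : Odd (A.charpoly.rootMultiplicity ρ) := by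
        have := (hlam ρ).mpr hex
        exact this.2
      have h1 := hmultA ρ
      rw [if_pos hex] at h1
      rw [h1, Nat.odd_iff] at hodd
      rw [Nat.even_iff]
      omega
    · have hnodd : ¬ Odd (A.charpoly.rootMultiplicity ρ) := fun ho => hex ((hlam ρ).mp ⟨hρ, ho⟩)
      have h1 := hmultA ρ
      rw [if_neg hex, zero_add] at h1
      rw [h1, Nat.odd_iff] at hnodd
      rw [Nat.even_iff]
      omega
  set f : Matrix ι₂ ι₂ ℝ →ₗ[ℝ] Matrix (Fin n) (Fin n) ℝ :=
    { toFun := fun E => Pmat b * (Matrix.fromBlocks 0 0 0 E : Matrix (Fin N ⊕ ι₂) (Fin N ⊕ ι₂) ℝ) * Qmat b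
      map_add' := by
        intro E E'
        rw [show Matrix.fromBlocks (0:Matrix (Fin N) (Fin N) ℝ) (0:Matrix (Fin N) ι₂ ℝ)
            (0:Matrix ι₂ (Fin N) ℝ) (E + E')
            = Matrix.fromBlocks 0 0 0 E + Matrix.fromBlocks 0 0 0 E' from by
          rw [Matrix.fromBlocks_add]; simp]
        rw [Matrix.mul_add, Matrix.add_mul]
      map_smul' := by
        intro s E
        rw [show Matrix.fromBlocks (0:Matrix (Fin N) (Fin N) ℝ) (0:Matrix (Fin N) ι₂ ℝ)
            (0:Matrix ι₂ (Fin N) ℝ) (s • E)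
            = s • Matrix.fromBlocks 0 0 0 E from by
          rw [Matrix.fromBlocks_smul]; simp]
        rw [Matrix.mul_smul, Matrix.smul_mul]
        rfl } with hf
  set L := LinearMap.toContinuousLinearMap f with hL
  set K : ℝ := @norm _ (@ContinuousLinearMap.hasOpNorm ℝ ℝ _ _ _ _ _ _ _ _ _) L with hK
  have hK0 : 0 ≤ K := norm_nonneg _
  obtain ⟨Cm', hCnorm, hCroots⟩ :=
    key r (Fintype.card ι₂) ι₂ Cm le_rfl hevenC (ε / (K + 1)) (by positivity)
  have hCm'ne := (Matrix.charpoly_monic Cm').ne_zero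
  set Atld : Matrix (Fin n) (Fin n) ℝ :=
    Pmat b * Matrix.fromBlocks (Matrix.diagonal lam) B 0 Cm' * Qmat b with hAtld
  have hcpAt : Atld.charpoly = (∏ i, (X - C (lam i))) * Cm'.charpoly := by
    rw [hAtld, charpoly_conj _ _ _ hpq hqp, Matrix.charpoly_fromBlocks_zero₂₁,
      charpoly_diagonal]
  refine ⟨Atld, ?_, ?_, ?_, ?_⟩
  · have hFB : Matrix.fromBlocks (Matrix.diagonal lam) B 0 Cm
        - Matrix.fromBlocks (Matrix.diagonal lam) B 0 Cm'
        = Matrix.fromBlocks 0 0 0 (Cm - Cm') := by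
      ext (i|i) (j|j) <;> simp [Matrix.fromBlocks]
    have hdiff : A - Atld = f (Cm - Cm') := by
      rw [hAtld]
      conv_lhs => rw [hAconj]
      rw [← Matrix.sub_mul, ← Matrix.mul_sub, hFB]
      rfl
    rw [hdiff]
    calc ‖f (Cm - Cm')‖ = ‖L (Cm - Cm')‖ := by rw [hL]; rfl
      _ ≤ K * ‖Cm - Cm'‖ := L.le_opNorm _
      _ ≤ K * (ε / (K + 1)) := mul_le_mul_of_nonneg_left (le_of_lt hCnorm) hK0
      _ = ε * (K / (K + 1)) := by ring
      _ < ε * 1 := by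
          apply mul_lt_mul_of_pos_left _ hε
          rw [div_lt_one (by positivity)]
          linarith
      _ = ε := mul_one ε
  · intro ρ hρ
    rw [hcpAt, IsRoot, eval_mul, mul_eq_zero]
    constructor
    · rintro (h | h)
      · rw [eval_prod] at h
        obtain ⟨i, _, hi⟩ := Finset.prod_eq_zero_iff.1 h
        simp only [eval_sub, eval_X, eval_C, sub_eq_zero] at hi
        exact ⟨i, hi.symm⟩
      · exact absurd h (hCroots ρ hρ)
    · rintro ⟨j, rfl⟩
      left
      rw [eval_prod]
      apply Finset.prod_eq_zero (Finset.mem_univ j)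
      simp
  · intro j
    have hrj : r < lam j := ((hlam (lam j)).mpr ⟨j, rfl⟩).1
    rw [hcpAt, rootMultiplicity_mul (mul_ne_zero hprodne hCm'ne), rootMult_prod lam hinj,
      if_pos ⟨j, rfl⟩, rootMultiplicity_eq_zero (hCroots _ hrj)]
  · intro j w
    have hrj : r < lam j := ((hlam (lam j)).mpr ⟨j, rfl⟩).1
    have hdet : (lam j • (1 : Matrix ι₂ ι₂ ℝ) - Cm').det ≠ 0 := by
      rw [← eval_charpoly]
      exact hCroots _ hrj
    have hsgl : ((Pi.single (Sum.inl j) 1 : (Fin N ⊕ ι₂) → ℝ) ∘ Sum.inl) = Pi.single j 1 := by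
      ext i
      simp [Pi.single_apply]
    have hsgr : ((Pi.single (Sum.inl j) 1 : (Fin N ⊕ ι₂) → ℝ) ∘ Sum.inr) = 0 := by
      ext a
      simp [Pi.single_apply]
    have hcol : (Matrix.fromBlocks (Matrix.diagonal lam) B 0 Cm').mulVec
        (Pi.single (Sum.inl j) (1:ℝ)) = lam j • (Pi.single (Sum.inl j) 1 : (Fin N ⊕ ι₂) → ℝ) := by
      rw [Matrix.fromBlocks_mulVec, hsgl, hsgr]
      funext a
      cases a with
      | inl i =>
        by_cases hij : i = j
        · subst hij
          simp [Matrix.mulVec_diagonal]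
        · simp [Matrix.mulVec_diagonal, Pi.single_apply, hij]
      | inr a => simp
    have hAvj : Atld.mulVec (v j) = lam j • v j := by
      rw [hAtld, ← Matrix.mulVec_mulVec, ← Matrix.mulVec_mulVec, ← hb j, ← Pmat_single b,
        Qmat_Pmat_mulVec, hcol, Matrix.mulVec_smul, Pmat_single]
    constructor
    · intro hw
      set uvec := (Qmat b).mulVec w with huvec
      have hPu : (Pmat b).mulVec uvec = w := Pmat_Qmat_mulVec b w
      have hMu : (Matrix.fromBlocks (Matrix.diagonal lam) B 0 Cm').mulVec uvec
          = lam j • uvec := by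
        have h1 := congrArg (Qmat b).mulVec hw
        rw [hAtld, ← Matrix.mulVec_mulVec, ← Matrix.mulVec_mulVec, ← huvec,
          Qmat_Pmat_mulVec, Matrix.mulVec_smul] at h1
        exact h1
      rw [Matrix.fromBlocks_mulVec] at hMu
      have hy : (uvec ∘ Sum.inr) = 0 := by
        apply vec_eq_zero_of_det_ne hdet
        funext a
        have h2 := congrFun hMu (Sum.inr a)
        simp only [Sum.elim_inr, Matrix.zero_mulVec, zero_add, Pi.smul_apply,
          smul_eq_mul] at h2
        rw [Matrix.sub_mulVec, Matrix.smul_mulVec, Matrix.one_mulVec]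
        simp only [Pi.sub_apply, Pi.smul_apply, smul_eq_mul, Pi.zero_apply]
        rw [h2]
        simp only [Function.comp_apply, sub_self]
      have hx : ∀ i, i ≠ j → uvec (Sum.inl i) = 0 := by
        intro i hij
        have h2 := congrFun hMu (Sum.inl i)
        rw [hy] at h2
        simp only [Sum.elim_inl, Matrix.mulVec_zero, add_zero, Pi.smul_apply,
          smul_eq_mul, Matrix.mulVec_diagonal] at h2
        simp only [Function.comp_apply] at h2
        have hne : lam i - lam j ≠ 0 := sub_ne_zero.mpr (fun hc => hij (hinj hc))
        have : (lam i - lam j) * uvec (Sum.inl i) = 0 := by rw [sub_mul]; linarith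
        exact (mul_eq_zero.1 this).resolve_left hne
      have huv2 : uvec = uvec (Sum.inl j) • (Pi.single (Sum.inl j) 1 : (Fin N ⊕ ι₂) → ℝ) := by
        funext k
        cases k with
        | inl i =>
          by_cases hij : i = j
          · subst hij
            simp
          · simp [Pi.single_apply, hij, hx i hij]
        | inr a =>
          have := congrFun hy a
          simpa using this
      have hfin : w = uvec (Sum.inl j) • v j := by
        conv_lhs => rw [← hPu, huv2]
        rw [Matrix.mulVec_smul, Pmat_single, hb j]
      exact ⟨_, hfin⟩
    · rintro ⟨cc, rfl⟩
      rw [Matrix.mulVec_smul, hAvj, smul_comm]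
end

section
/- Let A ∈ ℝ^{n×n}, b ∈ ℝⁿ, B ∈ ℝ^{m×n}, η ∈ ℝ^m. Define Â ∈ ℝ^{(n+1)×(n+1)} with block form (A, b; 0, 1) and B̂ ∈ ℝ^{(m+1)×(n+1)} with block form (B, −η; 0, 1). Then the affine instance (A, b, B, η) is escaping if and only if the linear instance (Â, B̂) is escaping; that is, for all x ∈ ℝⁿ there exists k with f^k(x) ∉ P(B,η) (where f(x) = A x + b) if and only if for all y ∈ ℝ^{n+1} there exists k with Â^k y ∉ P(B̂). -/
/-- The homogenisation `Â = (A, b; 0, 1)` of the affine map `x ↦ A x + b`. -/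
def hatA {n : ℕ} (A : Matrix (Fin n) (Fin n) ℝ) (b : Fin n → ℝ) :
    Matrix (Fin (n + 1)) (Fin (n + 1)) ℝ :=
  Matrix.of fun i j =>
    if hi : (i : ℕ) < n then
      if hj : (j : ℕ) < n then A ⟨i, hi⟩ ⟨j, hj⟩ else b ⟨i, hi⟩
    else
      if (j : ℕ) < n then 0 else 1

/-- The homogenisation `B̂ = (B, -η; 0, 1)` of the affine constraints `B x ⊳ η`. -/
def hatB {m n : ℕ} (B : Matrix (Fin m) (Fin n) ℝ) (η : Fin m → ℝ) :
    Matrix (Fin (m + 1)) (Fin (n + 1)) ℝ :=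
  Matrix.of fun i j =>
    if hi : (i : ℕ) < m then
      if hj : (j : ℕ) < n then B ⟨i, hi⟩ ⟨j, hj⟩ else -η ⟨i, hi⟩
    else
      if (j : ℕ) < n then 0 else 1

lemma hatA_mulVec_snoc {n : ℕ} (A : Matrix (Fin n) (Fin n) ℝ) (b : Fin n → ℝ)
    (x : Fin n → ℝ) (t : ℝ) :
    (hatA A b).mulVec (Fin.snoc (t • x) t) = Fin.snoc (t • (A.mulVec x + b)) t := by
  funext i
  refine Fin.lastCases ?_ ?_ i
  · simp [Matrix.mulVec, dotProduct, Fin.sum_univ_castSucc, hatA]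
  · intro i
    simp [Matrix.mulVec, dotProduct, Fin.sum_univ_castSucc, hatA, Fin.eta,
      Finset.mul_sum, mul_add, mul_comm, mul_left_comm]

lemma hatA_pow_mulVec_snoc {n : ℕ} (A : Matrix (Fin n) (Fin n) ℝ) (b : Fin n → ℝ)
    (x : Fin n → ℝ) (t : ℝ) (k : ℕ) :
    ((hatA A b) ^ k).mulVec (Fin.snoc (t • x) t) =
      Fin.snoc (t • ((fun y => A.mulVec y + b)^[k] x)) t := by
  induction k with
  | zero => simp
  | succ k ih =>
    rw [pow_succ', ← Matrix.mulVec_mulVec, ih, Function.iterate_succ_apply',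
      hatA_mulVec_snoc]

lemma hatB_mulVec_snoc_castSucc {m n : ℕ} (B : Matrix (Fin m) (Fin n) ℝ) (η : Fin m → ℝ)
    (z : Fin n → ℝ) (t : ℝ) (j : Fin m) :
    (hatB B η).mulVec (Fin.snoc (t • z) t) (Fin.castSucc j) =
      t * (B.mulVec z j - η j) := by
  simp [Matrix.mulVec, dotProduct, Fin.sum_univ_castSucc, hatB, Fin.eta,
    sub_eq_add_neg, mul_comm, mul_left_comm]
  rw [mul_add, Finset.mul_sum, mul_neg]

lemma hatB_mulVec_last {m n : ℕ} (B : Matrix (Fin m) (Fin n) ℝ) (η : Fin m → ℝ)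
    (y : Fin (n + 1) → ℝ) :
    (hatB B η).mulVec y (Fin.last m) = y (Fin.last n) := by
  simp [Matrix.mulVec, dotProduct, Fin.sum_univ_castSucc, hatB]

/-- The affine instance `(A, b, B, η)` is escaping if and only if its homogenisation
`(Â, B̂)` is escaping. -/
theorem affine_escape_iff_homogenised_escape
    (n m : ℕ) (A : Matrix (Fin n) (Fin n) ℝ) (b : Fin n → ℝ)
    (B : Matrix (Fin m) (Fin n) ℝ) (η : Fin m → ℝ) :
    (∀ x : Fin n → ℝ, ∃ k : ℕ,
        ¬ ∀ j : Fin m, η j < B.mulVec ((fun y => A.mulVec y + b)^[k] x) j) ↔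
      (∀ y : Fin (n + 1) → ℝ, ∃ k : ℕ,
        ¬ ∀ j : Fin (m + 1), 0 < (hatB B η).mulVec (((hatA A b) ^ k).mulVec y) j) := by
  constructor
  · intro h y
    set t := y (Fin.last n) with ht
    by_cases htpos : 0 < t
    · obtain ⟨k, hk⟩ := h (t⁻¹ • Fin.init y)
      refine ⟨k, fun hc => hk fun j => ?_⟩
      have hy : Fin.snoc (t • (t⁻¹ • Fin.init y)) t = y := by
        rw [smul_smul, mul_inv_cancel₀ htpos.ne', one_smul]; exact Fin.snoc_init_self y
      have := hc (Fin.castSucc j)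
      rw [← hy, hatA_pow_mulVec_snoc, hatB_mulVec_snoc_castSucc] at this
      have := mul_pos_iff.mp this
      rcases this with ⟨_, h2⟩ | ⟨h1, _⟩
      · linarith
      · exact absurd htpos (not_lt.mpr h1.le)
    · refine ⟨0, fun hc => ?_⟩
      have := hc (Fin.last m)
      rw [pow_zero, Matrix.one_mulVec, hatB_mulVec_last] at this
      exact htpos this
  · intro h x
    obtain ⟨k, hk⟩ := h (Fin.snoc x 1)
    refine ⟨k, fun hc => hk fun j => ?_⟩
    have hy : (Fin.snoc x 1 : Fin (n+1) → ℝ) = Fin.snoc ((1:ℝ) • x) 1 := by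
      rw [one_smul]
    rw [hy, hatA_pow_mulVec_snoc]
    refine Fin.lastCases ?_ ?_ j
    · rw [hatB_mulVec_last, Fin.snoc_last]; norm_num
    · intro j
      rw [hatB_mulVec_snoc_castSucc, one_mul, sub_pos]
      exact hc j
end

section
/- Let A ∈ ℝ^{n×n}, b ∈ ℝⁿ, B ∈ ℝ^{m×n}, η ∈ ℝ^m, and f(x) = A x + b. Suppose A has a real eigenvalue λ > 1 with an eigenvector v ∈ ℝⁿ satisfying B_j v > 0 for all j ∈ {1,...,m}. Then the affine instance (A, b, B, η) is trapped: there exists x ∈ ℝⁿ with B_j (f^k(x)) > η_j for all j ∈ {1,...,m} and all k ≥ 0. -/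
lemma aux_growth (d : ℕ) {lam : ℝ} (hlam : 1 < lam) :
    ∃ C : ℝ, 1 ≤ C ∧ ∀ k : ℕ, ((k : ℝ) + 1) ^ d ≤ C * lam ^ k := by
  have hT := tendsto_pow_const_div_const_pow_of_one_lt d hlam
  obtain ⟨C, hC⟩ := hT.bddAbove_range
  refine ⟨max (C * lam) 1, le_max_right _ _, fun k => ?_⟩
  have h1 : ((k : ℝ) + 1) ^ d / lam ^ (k + 1) ≤ C := hC ⟨k + 1, by push_cast; ring_nf⟩
  have hpow : (0:ℝ) < lam ^ (k+1) := pow_pos (by linarith) _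
  have h2 : ((k : ℝ) + 1) ^ d ≤ C * lam ^ (k + 1) := by
    rw [div_le_iff₀ hpow] at h1; linarith
  have hC2 : C * lam ^ (k+1) = (C * lam) * lam ^ k := by ring
  calc ((k : ℝ) + 1) ^ d ≤ (C * lam) * lam ^ k := by rw [← hC2]; exact h2
    _ ≤ max (C * lam) 1 * lam ^ k :=
        mul_le_mul_of_nonneg_right (le_max_left _ _) (pow_nonneg (by linarith) _)

lemma aux_binom {n : ℕ} (E : Module.End ℝ (Fin n → ℝ)) (b1 : Fin n → ℝ) (N : ℕ)
    (hN : ((E - 1) ^ N) b1 = 0) (i : ℕ) :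
    (E ^ i) b1 = ∑ j ∈ Finset.range N, (i.choose j : ℝ) • ((E - 1) ^ j) b1 := by
  set g := E - 1 with hg
  have hzero : ∀ j, N ≤ j → (g ^ j) b1 = 0 := fun j hj =>
    Module.End.pow_map_zero_of_le hj hN
  have hE : E = g + 1 := by rw [hg, sub_add_cancel]
  have hexp : (E ^ i) b1
      = ∑ j ∈ Finset.range (i + 1), (i.choose j : ℝ) • ((g ^ j) b1) := by
    rw [hE, Commute.add_pow (Commute.one_right g)]
    rw [LinearMap.sum_apply]
    refine Finset.sum_congr rfl fun j hj => ?_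
    rw [one_pow, mul_one, Module.End.mul_apply, Module.End.natCast_apply, map_nsmul,
      Nat.cast_smul_eq_nsmul ℝ]
  rw [hexp]
  set t : ℕ → (Fin n → ℝ) := fun j => (i.choose j : ℝ) • ((g ^ j) b1) with ht
  have h1 : ∑ j ∈ Finset.range (i + 1), t j = ∑ j ∈ Finset.range (max (i + 1) N), t j := by
    refine Finset.sum_subset (Finset.range_subset_range.2 (le_max_left _ _)) fun j _ hj => ?_
    simp only [Finset.mem_range, not_lt] at hj
    simp [ht, Nat.choose_eq_zero_of_lt (by omega : i < j)]
  have h2 : ∑ j ∈ Finset.range N, t j = ∑ j ∈ Finset.range (max (i + 1) N), t j := by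
    refine Finset.sum_subset (Finset.range_subset_range.2 (le_max_right _ _)) fun j _ hj => ?_
    simp only [Finset.mem_range, not_lt] at hj
    simp [ht, hzero j hj]
  rw [h1, ← h2]

/-- If `A` has a real eigenvalue `λ > 1` with an eigenvector `v` satisfying `B v ⊳ 0`,
then the affine instance `(A, b, B, η)` is trapped. -/
theorem affine_trapped_of_expanding_eigenvector
    (n m : ℕ) (A : Matrix (Fin n) (Fin n) ℝ) (b : Fin n → ℝ)
    (B : Matrix (Fin m) (Fin n) ℝ) (η : Fin m → ℝ)
    (lam : ℝ) (hlam : 1 < lam) (v : Fin n → ℝ) (hv0 : v ≠ 0)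
    (hv : A.mulVec v = lam • v) (hB : ∀ j : Fin m, 0 < B.mulVec v j) :
    ∃ x : Fin n → ℝ, ∀ k : ℕ, ∀ j : Fin m,
      η j < B.mulVec ((fun y => A.mulVec y + b)^[k] x) j := by
  classical
  rcases Nat.eq_zero_or_pos m with hm | hm
  · subst hm; exact ⟨0, fun k j => j.elim0⟩
  haveI : Nonempty (Fin m) := ⟨⟨0, hm⟩⟩
  set E : Module.End ℝ (Fin n → ℝ) := Matrix.mulVecLin A with hEdef
  set g : Module.End ℝ (Fin n → ℝ) := E - 1 with hgdef
  -- Fitting decomposition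
  obtain ⟨N0, hN0⟩ := Filter.eventually_atTop.mp (LinearMap.eventually_isCompl_ker_pow_range_pow g)
  set N := max N0 1 with hNdef
  have hcompl := hN0 N (le_max_left _ _)
  have hbmem : b ∈ LinearMap.ker (g ^ N) ⊔ LinearMap.range (g ^ N) := by
    rw [hcompl.codisjoint.eq_top]; trivial
  obtain ⟨b1, hb1, b2, hb2, hsum⟩ := Submodule.mem_sup.mp hbmem
  have hb1ker : (g ^ N) b1 = 0 := LinearMap.mem_ker.mp hb1
  obtain ⟨y, hy⟩ := hb2
  set p := -((g ^ (N - 1)) y) with hpdef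
  have hgq : g ((g ^ (N - 1)) y) = b2 := by
    have hpow : g * g ^ (N - 1) = g ^ N := by
      rw [← pow_succ']; congr 1; omega
    rw [← Module.End.mul_apply, hpow, hy]
  have hp : g p = b1 - b := by
    rw [hpdef, map_neg, hgq, ← hsum]; abel
  have hAp : A.mulVec p = p + b1 - b := by
    have h1 : g p = A.mulVec p - p := by
      rw [hgdef, LinearMap.sub_apply, Module.End.one_apply, hEdef, Matrix.mulVecLin_apply]
    rw [h1] at hp
    have := hp
    rw [sub_eq_sub_iff_add_eq_add] at this
    rw [eq_sub_iff_add_eq]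
    rw [this]; abel
  set u : ℕ → (Fin n → ℝ) := fun k => ∑ i ∈ Finset.range k, (E ^ i) b1 with hudef
  -- constants
  set K : ℝ := ∑ j ∈ Finset.range N, ∑ j' : Fin m, |B.mulVec ((g ^ j) b1) j'| with hKdef
  have hK0 : 0 ≤ K := Finset.sum_nonneg fun j _ =>
    Finset.sum_nonneg fun j' _ => abs_nonneg _
  -- bound on B (E^i b1)
  have hEib : ∀ (i : ℕ) (j' : Fin m),
      |B.mulVec ((E ^ i) b1) j'| ≤ ((i : ℝ) + 1) ^ N * K := by
    intro i j'
    rw [aux_binom E b1 N hb1ker i]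
    have hlin : B.mulVec (∑ j ∈ Finset.range N, (i.choose j : ℝ) • ((g ^ j) b1)) j'
        = ∑ j ∈ Finset.range N, (i.choose j : ℝ) * B.mulVec ((g ^ j) b1) j' := by
      rw [show ∀ w, B.mulVec w = B.mulVecLin w from fun w => rfl]
      rw [map_sum]
      rw [Finset.sum_apply]
      refine Finset.sum_congr rfl fun j _ => ?_
      rw [map_smul]; rfl
    rw [hlin]
    calc |∑ j ∈ Finset.range N, (i.choose j : ℝ) * B.mulVec ((g ^ j) b1) j'|
        ≤ ∑ j ∈ Finset.range N, |(i.choose j : ℝ) * B.mulVec ((g ^ j) b1) j'| :=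
          Finset.abs_sum_le_sum_abs _ _
      _ ≤ ∑ j ∈ Finset.range N, ((i : ℝ) + 1) ^ N * |B.mulVec ((g ^ j) b1) j'| := by
          refine Finset.sum_le_sum fun j hj => ?_
          rw [abs_mul, Nat.abs_cast]
          refine mul_le_mul_of_nonneg_right ?_ (abs_nonneg _)
          have h1 : i.choose j ≤ (i + 1) ^ N := by
            calc i.choose j ≤ i ^ j := Nat.choose_le_pow i j
              _ ≤ (i + 1) ^ j := Nat.pow_le_pow_left (by omega) _
              _ ≤ (i + 1) ^ N := Nat.pow_le_pow_right (by omega)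
                  (le_of_lt (Finset.mem_range.mp hj))
          calc (i.choose j : ℝ) ≤ ((i + 1) ^ N : ℕ) := Nat.cast_le.mpr h1
            _ = ((i : ℝ) + 1) ^ N := by push_cast; ring
      _ ≤ ((i : ℝ) + 1) ^ N * K := by
          rw [hKdef, ← Finset.mul_sum]
          refine mul_le_mul_of_nonneg_left ?_ (by positivity)
          refine Finset.sum_le_sum fun j _ => ?_
          exact Finset.single_le_sum (f := fun j'' => |B.mulVec ((g ^ j) b1) j''|)
            (fun j'' _ => abs_nonneg _) (Finset.mem_univ j')
  -- bound on B (u k)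
  have hub : ∀ (k : ℕ) (j' : Fin m),
      |B.mulVec (u k) j'| ≤ ((k : ℝ) + 1) ^ (N + 1) * K := by
    intro k j'
    have hlin : B.mulVec (u k) j' = ∑ i ∈ Finset.range k, B.mulVec ((E ^ i) b1) j' := by
      rw [hudef, show ∀ w, B.mulVec w = B.mulVecLin w from fun w => rfl, map_sum,
        Finset.sum_apply]
      exact Finset.sum_congr rfl fun i _ => rfl
    rw [hlin]
    calc |∑ i ∈ Finset.range k, B.mulVec ((E ^ i) b1) j'|
        ≤ ∑ i ∈ Finset.range k, |B.mulVec ((E ^ i) b1) j'| := Finset.abs_sum_le_sum_abs _ _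
      _ ≤ ∑ i ∈ Finset.range k, ((k : ℝ) + 1) ^ N * K := by
          refine Finset.sum_le_sum fun i hi => ?_
          refine le_trans (hEib i j') (mul_le_mul_of_nonneg_right ?_ hK0)
          have hik : (i : ℝ) + 1 ≤ (k : ℝ) + 1 :=
            add_le_add_left (Nat.cast_le.mpr (Finset.mem_range.mp hi).le) 1
          exact pow_le_pow_left₀ (by positivity) hik _
      _ = (k : ℝ) * (((k : ℝ) + 1) ^ N * K) := by
          rw [Finset.sum_const, Finset.card_range, nsmul_eq_mul]
      _ ≤ ((k : ℝ) + 1) ^ (N + 1) * K := by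
          rw [pow_succ]
          have h1 : (0:ℝ) ≤ ((k : ℝ) + 1) ^ N := by positivity
          nlinarith [Nat.cast_nonneg (α := ℝ) k]
  obtain ⟨C, hC1, hCg⟩ := aux_growth (N + 1) hlam
  -- the trap point
  set β : ℝ := Finset.univ.inf' Finset.univ_nonempty (fun j => B.mulVec v j) with hβdef
  have hβpos : 0 < β := by
    rw [hβdef, Finset.lt_inf'_iff]
    exact fun j _ => hB j
  have hβle : ∀ j : Fin m, β ≤ B.mulVec v j := fun j =>
    Finset.inf'_le (fun j => B.mulVec v j) (Finset.mem_univ j)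
  set Γ : ℝ := Finset.univ.sup' Finset.univ_nonempty (fun j => η j - B.mulVec p j) with hΓdef
  have hΓle : ∀ j : Fin m, η j - B.mulVec p j ≤ Γ := fun j =>
    Finset.le_sup' (fun j => η j - B.mulVec p j) (Finset.mem_univ j)
  set D : ℝ := max Γ 0 + K * C + 1 with hDdef
  have hDpos : 0 < D := by
    have : (0:ℝ) ≤ K * C := mul_nonneg hK0 (by linarith)
    have := le_max_right Γ 0
    rw [hDdef]; linarith
  set c : ℝ := D / β with hcdef
  have hcβ : c * β = D := div_mul_cancel₀ D (ne_of_gt hβpos)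
  have hc0 : 0 ≤ c := le_of_lt (div_pos hDpos hβpos)
  refine ⟨p + c • v, ?_⟩
  have traj : ∀ k : ℕ,
      (fun y => A.mulVec y + b)^[k] (p + c • v) = p + (c * lam ^ k) • v + u k := by
    intro k
    induction k with
    | zero => simp [hudef]
    | succ k ih =>
      rw [Function.iterate_succ_apply', ih]
      show A.mulVec (p + (c * lam ^ k) • v + u k) + b = _
      have hu' : u (k + 1) = b1 + A.mulVec (u k) := by
        show (∑ i ∈ Finset.range (k + 1), (E ^ i) b1) = b1 + A.mulVec (u k)
        rw [Finset.sum_range_succ']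
        simp only [pow_succ', Module.End.mul_apply, pow_zero, Module.End.one_apply]
        rw [← map_sum, add_comm]
        rfl
      rw [Matrix.mulVec_add, Matrix.mulVec_add, Matrix.mulVec_smul, hv, hAp, hu',
        smul_smul, pow_succ, ← mul_assoc]
      abel
  intro k j
  rw [traj k]
  have hsplit : B.mulVec (p + (c * lam ^ k) • v + u k) j
      = B.mulVec p j + (c * lam ^ k) * B.mulVec v j + B.mulVec (u k) j := by
    rw [Matrix.mulVec_add, Matrix.mulVec_add, Matrix.mulVec_smul]
    simp [smul_eq_mul]
  rw [hsplit]
  have hlamk1 : 1 ≤ lam ^ k := one_le_pow₀ (le_of_lt hlam)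
  have hlamk0 : (0:ℝ) < lam ^ k := by linarith
  have huk : |B.mulVec (u k) j| ≤ K * C * lam ^ k := by
    refine le_trans (hub k j) ?_
    calc ((k : ℝ) + 1) ^ (N + 1) * K ≤ (C * lam ^ k) * K :=
        mul_le_mul_of_nonneg_right (hCg k) hK0
      _ = K * C * lam ^ k := by ring
  have huk' : -(K * C * lam ^ k) ≤ B.mulVec (u k) j := (abs_le.mp huk).1
  have hΓ1 : η j - B.mulVec p j ≤ max Γ 0 := le_trans (hΓle j) (le_max_left _ _)
  have hΓ2 : max Γ 0 ≤ max Γ 0 * lam ^ k :=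
    le_mul_of_one_le_right (le_max_right _ _) hlamk1
  have hcv : D * lam ^ k ≤ c * lam ^ k * B.mulVec v j := by
    have h1 : c * lam ^ k * β ≤ c * lam ^ k * B.mulVec v j :=
      mul_le_mul_of_nonneg_left (hβle j) (mul_nonneg hc0 (le_of_lt hlamk0))
    calc D * lam ^ k = c * lam ^ k * β := by rw [← hcβ]; ring
      _ ≤ _ := h1
  have hDexp : D * lam ^ k = max Γ 0 * lam ^ k + K * C * lam ^ k + lam ^ k := by
    rw [hDdef]; ring
  linarith
end
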